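/- arXiv:2510.07245 — 8 statements merged into one kernel-verified Lean document; each statement's English description precedes it below -/
import Mathlib

section
/- Let 𝒯 be a teacher class over (X,Y,Φ) and let H be a nonempty history consistent with 𝒯. Then the minimum over all deterministic DFF algorithms 𝒜 of the worst-case mistake bound M(𝒜,𝒯,H) equals DFFdim(𝒯,H). -/
open scoped Classical

/-- A teacher over examples `X`, labels `Y` and Boolean features `Φ`:
a labeling function together with a feature-feedback function that, whenever
two examples receive different labels, returns a feature of `Φ` satisfied by
the first example and not by the second. -/
structure Teacher (X Y : Type) (Φ : Set (X → Bool)) where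
  label : X → Y
  feedback : X → X → Option (X → Bool)
  feedback_spec : ∀ x xh : X, label x ≠ label xh →
    ∃ φ ∈ Φ, feedback x xh = some φ ∧ φ x = true ∧ φ xh = false

/-- A teacher is consistent with a history `H` of labeled examples. -/
def ConsistentH {X Y : Type} {Φ : Set (X → Bool)} (T : Teacher X Y Φ)
    (H : Set (X × Y)) : Prop :=
  ∀ p ∈ H, T.label p.1 = p.2

/-- Restriction of a teacher class by one round of DFF interaction: the
teachers that label `x` with `y` and give feature feedback `φ` on `(x, xh)`. -/
def TRestrict {X Y : Type} {Φ : Set (X → Bool)} (𝒯 : Set (Teacher X Y Φ))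
    (x xh : X) (y : Y) (φ : X → Bool) : Set (Teacher X Y Φ) :=
  {T | T ∈ 𝒯 ∧ T.label x = y ∧ T.feedback x xh = some φ}

/-- `ShatteredDFFT Φ 𝒯 H d` holds iff there is a DFF tree of height `d`
shattered by the teacher class `𝒯` and the history `H`: at a leaf, some
teacher of the current class is consistent with the accumulated history
(i.e. every root-to-leaf path of the tree is consistent with some teacher of
the original class that is consistent with the original history); at an inner
node a next example `x` is presented, and for every available explanation
pair `(xh, yh)` (an element of the history or a labeled example revealed
along the path, all of which are accumulated in `H`) there is teacher
feedback `(y, φ)` with `y ≠ yh` and `φ ∈ Φ` leading to a shattered subtree of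
height `d` for the correspondingly restricted class and extended history. -/
inductive ShatteredDFFT {X Y : Type} (Φ : Set (X → Bool)) :
    Set (Teacher X Y Φ) → Set (X × Y) → ℕ → Prop
  | leaf (𝒯 : Set (Teacher X Y Φ)) (H : Set (X × Y))
      (h : ∃ T ∈ 𝒯, ConsistentH T H) : ShatteredDFFT Φ 𝒯 H 0
  | node (𝒯 : Set (Teacher X Y Φ)) (H : Set (X × Y)) (d : ℕ) (x : X)
      (y : X × Y → Y) (φ : X × Y → (X → Bool))
      (hne : ∀ p ∈ H, y p ≠ p.2) (hΦ : ∀ p ∈ H, φ p ∈ Φ)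
      (h : ∀ p ∈ H,
        ShatteredDFFT Φ (TRestrict 𝒯 x p.1 (y p) (φ p)) (insert (x, y p) H) d) :
      ShatteredDFFT Φ 𝒯 H (d + 1)

/-- The DFF dimension of a teacher class `𝒯` with history `H`: the maximal
height of a DFF tree shattered by `𝒯` and `H` (possibly infinite). -/
noncomputable def DFFdim {X Y : Type} (Φ : Set (X → Bool))
    (𝒯 : Set (Teacher X Y Φ)) (H : Set (X × Y)) : ℕ∞ :=
  sSup {d : ℕ∞ | ∃ n : ℕ, d = n ∧ ShatteredDFFT Φ 𝒯 H n}
/-- A transcript of DFF interaction: each entry records the presented example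
`x`, the explanation `xh` and prediction `yh` output by the learner, and, on a
mistake round, the teacher feedback `(y, φ)` (`none` on correct rounds). -/
abbrev DFFTranscript (X Y : Type) : Type :=
  List (X × X × Y × Option (Y × Option (X → Bool)))

/-- A deterministic DFF algorithm: given the transcript so far and the next
example, output an explanation example together with a predicted label. -/
abbrev DFFAlg (X Y : Type) : Type := DFFTranscript X Y → X → X × Y

/-- The labeled examples revealed by a transcript: on a correct round the
predicted label is revealed to be correct; on a mistake round the teacher
reveals the correct label. -/
def revealed {X Y : Type} (tr : DFFTranscript X Y) : Set (X × Y) :=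
  {p | ∃ e ∈ tr, e.1 = p.1 ∧
    ((e.2.2.2 = none ∧ e.2.2.1 = p.2) ∨ ∃ φ, e.2.2.2 = some (p.2, φ))}

/-- One round of the realizable DFF protocol between algorithm `A` and
teacher `T`: present `x`, let the algorithm predict, and append the teacher's
feedback on a mistake. -/
noncomputable def dffStep {X Y : Type} {Φ : Set (X → Bool)} (A : DFFAlg X Y)
    (T : Teacher X Y Φ) (tr : DFFTranscript X Y) (x : X) : DFFTranscript X Y :=
  if (A tr x).2 = T.label x then tr ++ [(x, (A tr x).1, (A tr x).2, none)]
  else tr ++ [(x, (A tr x).1, (A tr x).2, some (T.label x, T.feedback x (A tr x).1))]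

/-- The transcript produced by running algorithm `A` against teacher `T` on a
finite sequence of examples. -/
noncomputable def dffRun {X Y : Type} {Φ : Set (X → Bool)} (A : DFFAlg X Y)
    (T : Teacher X Y Φ) (xs : List X) : DFFTranscript X Y :=
  xs.foldl (dffStep A T) []

/-- The number of mistake rounds in a transcript. -/
def dffMistakes {X Y : Type} (tr : DFFTranscript X Y) : ℕ :=
  tr.countP fun e => e.2.2.2.isSome

/-- A DFF algorithm is legal for `(𝒯, H)` if, on any transcript reachable by
interacting with a teacher of `𝒯` consistent with `H`, the explanation and
prediction it outputs form a pair of `H` or a previously revealed labeled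
example. -/
def LegalAlg {X Y : Type} {Φ : Set (X → Bool)} (A : DFFAlg X Y)
    (𝒯 : Set (Teacher X Y Φ)) (H : Set (X × Y)) : Prop :=
  ∀ T ∈ 𝒯, ConsistentH T H → ∀ (xs : List X) (x : X),
    A (dffRun A T xs) x ∈ H ∪ revealed (dffRun A T xs)

/-- The worst-case number of mistakes of algorithm `A` over all finite example
sequences and all teachers of `𝒯` consistent with `H` (possibly infinite). -/
noncomputable def MBound {X Y : Type} {Φ : Set (X → Bool)} (A : DFFAlg X Y)
    (𝒯 : Set (Teacher X Y Φ)) (H : Set (X × Y)) : ℕ∞ :=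
  sSup {m : ℕ∞ | ∃ T ∈ 𝒯, ConsistentH T H ∧
    ∃ xs : List X, m = (dffMistakes (dffRun A T xs) : ℕ∞)}


section Aux
variable {X Y : Type} {Φ : Set (X → Bool)}

lemma revealed_nil : revealed ([] : DFFTranscript X Y) = ∅ := by
  ext p; simp [revealed]

lemma revealed_append_correct (tr : DFFTranscript X Y) (x xh : X) (yh : Y) :
    revealed (tr ++ [(x, xh, yh, none)]) = insert (x, yh) (revealed tr) := by
  ext p
  simp only [revealed, Set.mem_setOf_eq, List.mem_append, List.mem_singleton,
    Set.mem_insert_iff]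
  constructor
  · rintro ⟨e, (he | rfl), h1, h2⟩
    · exact Or.inr ⟨e, he, h1, h2⟩
    · rcases h2 with ⟨-, h2⟩ | ⟨φ, h2⟩
      · exact Or.inl (by cases p; simp_all)
      · simp at h2
  · rintro (rfl | ⟨e, he, h1, h2⟩)
    · exact ⟨_, Or.inr rfl, rfl, Or.inl ⟨rfl, rfl⟩⟩
    · exact ⟨e, Or.inl he, h1, h2⟩

lemma revealed_append_mistake (tr : DFFTranscript X Y) (x xh : X) (yh y : Y)
    (oφ : Option (X → Bool)) :
    revealed (tr ++ [(x, xh, yh, some (y, oφ))]) = insert (x, y) (revealed tr) := by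
  ext p
  simp only [revealed, Set.mem_setOf_eq, List.mem_append, List.mem_singleton,
    Set.mem_insert_iff]
  constructor
  · rintro ⟨e, (he | rfl), h1, h2⟩
    · exact Or.inr ⟨e, he, h1, h2⟩
    · rcases h2 with ⟨h2, -⟩ | ⟨φ, h2⟩
      · simp at h2
      · simp only [Option.some.injEq, Prod.mk.injEq] at h2
        exact Or.inl (by cases p; cases h2.1; simp_all)
  · rintro (rfl | ⟨e, he, h1, h2⟩)
    · exact ⟨_, Or.inr rfl, rfl, Or.inr ⟨oφ, rfl⟩⟩
    · exact ⟨e, Or.inl he, h1, h2⟩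

lemma shattered_consistent :
    ∀ {C : Set (Teacher X Y Φ)} {H' : Set (X × Y)} {n : ℕ},
      ShatteredDFFT Φ C H' n → H'.Nonempty → ∃ T ∈ C, ConsistentH T H' := by
  intro C H' n h
  induction h with
  | leaf C H h => exact fun _ => h
  | node C H d x y φ hney hΦ h ih =>
    intro hne
    obtain ⟨p, hp⟩ := hne
    obtain ⟨T, hT, hTc⟩ := ih p hp (Set.insert_nonempty _ _)
    exact ⟨T, hT.1, fun q hq => hTc q (Set.mem_insert_of_mem _ hq)⟩

lemma shattered_mono :
    ∀ {C : Set (Teacher X Y Φ)} {H' : Set (X × Y)} {n : ℕ},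
      ShatteredDFFT Φ C H' n → H'.Nonempty → ∀ m ≤ n, ShatteredDFFT Φ C H' m := by
  intro C H' n h
  induction h with
  | leaf C H h => intro _ m hm; interval_cases m; exact .leaf _ _ h
  | node C H d x y φ hney hΦ h ih =>
    intro hne m hm
    match m with
    | 0 => exact .leaf _ _ (shattered_consistent (.node C H d x y φ hney hΦ h) hne)
    | k+1 =>
      exact .node C H k x y φ hney hΦ
        (fun p hp => ih p hp (Set.insert_nonempty _ _) k (by omega))

lemma shattered_anti :
    ∀ {C : Set (Teacher X Y Φ)} {H₂ : Set (X × Y)} {n : ℕ},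
      ShatteredDFFT Φ C H₂ n → ∀ {H₁}, H₁ ⊆ H₂ → ShatteredDFFT Φ C H₁ n := by
  intro C H₂ n h
  induction h with
  | leaf C H h =>
    intro H₁ hsub
    obtain ⟨T, hT, hc⟩ := h
    exact .leaf _ _ ⟨T, hT, fun p hp => hc p (hsub hp)⟩
  | node C H d x y φ hney hΦ h ih =>
    intro H₁ hsub
    exact .node C H₁ d x y φ (fun p hp => hney p (hsub hp)) (fun p hp => hΦ p (hsub hp))
      (fun p hp => ih p (hsub hp) (Set.insert_subset_insert hsub))

lemma le_DFFdim {C : Set (Teacher X Y Φ)} {H' : Set (X × Y)} {n : ℕ}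
    (h : ShatteredDFFT Φ C H' n) : (n : ℕ∞) ≤ DFFdim Φ C H' :=
  le_sSup ⟨n, rfl, h⟩

lemma DFFdim_le {C : Set (Teacher X Y Φ)} {H' : Set (X × Y)} {n : ℕ}
    (hne : H'.Nonempty) (h : ¬ ShatteredDFFT Φ C H' (n + 1)) :
    DFFdim Φ C H' ≤ (n : ℕ∞) := by
  apply sSup_le
  rintro d ⟨k, rfl, hk⟩
  have hkn : k ≤ n := by
    by_contra hlt
    exact h (shattered_mono hk hne (n + 1) (by omega))
  exact_mod_cast hkn

lemma DFFdim_anti {C : Set (Teacher X Y Φ)} {H₁ H₂ : Set (X × Y)} (hsub : H₁ ⊆ H₂) :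
    DFFdim Φ C H₂ ≤ DFFdim Φ C H₁ := by
  apply sSup_le
  rintro d ⟨k, rfl, hk⟩
  exact le_DFFdim (shattered_anti hk hsub)

end Aux

section Aux2
variable {X Y : Type} {Φ : Set (X → Bool)}

/-- A "good" prediction pair for the standard-optimal algorithm: any feature
feedback on a mistake strictly decreases the DFF dimension. -/
def GoodP (Φ : Set (X → Bool)) (C : Set (Teacher X Y Φ)) (H' : Set (X × Y))
    (x : X) (n : ℕ) (p : X × Y) : Prop :=
  ∀ (y : Y) (φ : X → Bool), y ≠ p.2 → φ ∈ Φ →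
    ¬ ShatteredDFFT Φ (TRestrict C x p.1 y φ) (insert (x, y) H') n

lemma exists_good [Nonempty Y] {C : Set (Teacher X Y Φ)} {H' : Set (X × Y)} {n : ℕ}
    (hne : H'.Nonempty) (hfin : DFFdim Φ C H' = (n : ℕ∞)) (x : X) :
    ∃ p ∈ H', GoodP Φ C H' x n p := by
  by_contra hbad
  push_neg at hbad
  have hstep : ∀ p : X × Y, ∃ (y : Y) (φ : X → Bool), p ∈ H' →
      y ≠ p.2 ∧ φ ∈ Φ ∧
        ShatteredDFFT Φ (TRestrict C x p.1 y φ) (insert (x, y) H') n := by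
    intro p
    by_cases hp : p ∈ H'
    · have := hbad p hp
      unfold GoodP at this
      push_neg at this
      obtain ⟨y, φ, h1, h2, h3⟩ := this
      exact ⟨y, φ, fun _ => ⟨h1, h2, h3⟩⟩
    · exact ⟨Classical.arbitrary Y, fun _ => true, fun h => absurd h hp⟩
  choose y φ hyp using hstep
  have hsh : ShatteredDFFT Φ C H' (n + 1) :=
    .node C H' n x y φ (fun p hp => (hyp p hp).1) (fun p hp => (hyp p hp).2.1)
      (fun p hp => (hyp p hp).2.2)
  have := le_DFFdim hsh
  rw [hfin] at this
  exact absurd this (by exact_mod_cast Nat.not_succ_le_self n)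

/-- The teacher class consistent with the restrictions recorded in a transcript. -/
def stateClass (𝒯 : Set (Teacher X Y Φ)) (tr : DFFTranscript X Y) :
    Set (Teacher X Y Φ) :=
  tr.foldl (fun C e =>
    match e.2.2.2 with
    | some (y, some φ) => TRestrict C e.1 e.2.1 y φ
    | _ => C) 𝒯

@[simp] lemma stateClass_nil (𝒯 : Set (Teacher X Y Φ)) : stateClass 𝒯 [] = 𝒯 := rfl

lemma stateClass_append_correct (𝒯 : Set (Teacher X Y Φ)) (tr : DFFTranscript X Y)
    (x xh : X) (yh : Y) :
    stateClass 𝒯 (tr ++ [(x, xh, yh, none)]) = stateClass 𝒯 tr := by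
  simp [stateClass, List.foldl_append]

lemma stateClass_append_mistake (𝒯 : Set (Teacher X Y Φ)) (tr : DFFTranscript X Y)
    (x xh : X) (yh y : Y) (φ : X → Bool) :
    stateClass 𝒯 (tr ++ [(x, xh, yh, some (y, some φ))]) =
      TRestrict (stateClass 𝒯 tr) x xh y φ := by
  simp [stateClass, List.foldl_append]

lemma dffMistakes_append_correct (tr : DFFTranscript X Y) (x xh : X) (yh : Y) :
    dffMistakes (tr ++ [(x, xh, yh, none)]) = dffMistakes tr := by
  simp [dffMistakes, List.countP_append]

lemma dffMistakes_append_mistake (tr : DFFTranscript X Y) (x xh : X) (yh : Y)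
    (f : Y × Option (X → Bool)) :
    dffMistakes (tr ++ [(x, xh, yh, some f)]) = dffMistakes tr + 1 := by
  simp [dffMistakes, List.countP_append, List.countP_cons]

lemma dffRun_concat {Φ : Set (X → Bool)} (A : DFFAlg X Y) (T : Teacher X Y Φ)
    (xs : List X) (x : X) :
    dffRun A T (xs ++ [x]) = dffStep A T (dffRun A T xs) x := by
  simp [dffRun, List.foldl_append]

/-- The standard-optimal DFF algorithm. -/
noncomputable def Astar (Φ : Set (X → Bool)) (𝒯 : Set (Teacher X Y Φ))
    (H : Set (X × Y)) (p₀ : X × Y) : DFFAlg X Y := fun tr x =>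
  if h : ∃ p ∈ H ∪ revealed tr,
      GoodP Φ (stateClass 𝒯 tr) (H ∪ revealed tr) x
        ((DFFdim Φ (stateClass 𝒯 tr) (H ∪ revealed tr)).toNat) p
  then h.choose else p₀

lemma Astar_mem (Φ : Set (X → Bool)) (𝒯 : Set (Teacher X Y Φ)) (H : Set (X × Y))
    {p₀ : X × Y} (hp₀ : p₀ ∈ H) (tr : DFFTranscript X Y) (x : X) :
    Astar Φ 𝒯 H p₀ tr x ∈ H ∪ revealed tr := by
  unfold Astar
  split
  · next h => exact h.choose_spec.1
  · exact Or.inl hp₀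

end Aux2

section Aux3
variable {X Y : Type} {Φ : Set (X → Bool)}

lemma step_inv [Nonempty Y] {𝒯 : Set (Teacher X Y Φ)} {H : Set (X × Y)}
    (hH : H.Nonempty) {p₀ : X × Y} (hp₀ : p₀ ∈ H) (T : Teacher X Y Φ) {d₀ : ℕ}
    (tr : DFFTranscript X Y) (x : X)
    (h1 : T ∈ stateClass 𝒯 tr) (h2 : ConsistentH T (H ∪ revealed tr))
    (h3 : DFFdim Φ (stateClass 𝒯 tr) (H ∪ revealed tr) + dffMistakes tr ≤ (d₀ : ℕ∞)) :
    T ∈ stateClass 𝒯 (dffStep (Astar Φ 𝒯 H p₀) T tr x) ∧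
    ConsistentH T (H ∪ revealed (dffStep (Astar Φ 𝒯 H p₀) T tr x)) ∧
    DFFdim Φ (stateClass 𝒯 (dffStep (Astar Φ 𝒯 H p₀) T tr x))
        (H ∪ revealed (dffStep (Astar Φ 𝒯 H p₀) T tr x))
      + dffMistakes (dffStep (Astar Φ 𝒯 H p₀) T tr x) ≤ (d₀ : ℕ∞) := by
  have hpmem : Astar Φ 𝒯 H p₀ tr x ∈ H ∪ revealed tr := Astar_mem Φ 𝒯 H hp₀ tr x
  by_cases hc : (Astar Φ 𝒯 H p₀ tr x).2 = T.label x
  · -- correct round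
    rw [dffStep, if_pos hc]
    rw [stateClass_append_correct, revealed_append_correct, dffMistakes_append_correct,
      Set.union_insert]
    refine ⟨h1, ?_, ?_⟩
    · rintro q (rfl | hq)
      · simpa using hc.symm
      · exact h2 q hq
    · exact le_trans (add_le_add_left (DFFdim_anti (Set.subset_insert _ _)) _) h3
  · -- mistake round
    have hDne : DFFdim Φ (stateClass 𝒯 tr) (H ∪ revealed tr) ≠ ⊤ := by
      intro h
      rw [h, top_add] at h3
      exact absurd h3 (by simp)
    have hn : ((DFFdim Φ (stateClass 𝒯 tr) (H ∪ revealed tr)).toNat : ℕ∞)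
        = DFFdim Φ (stateClass 𝒯 tr) (H ∪ revealed tr) := ENat.coe_toNat hDne
    have hgoodex : ∃ p ∈ H ∪ revealed tr,
        GoodP Φ (stateClass 𝒯 tr) (H ∪ revealed tr) x
          ((DFFdim Φ (stateClass 𝒯 tr) (H ∪ revealed tr)).toNat) p :=
      exists_good (hH.mono Set.subset_union_left) hn.symm x
    have hA : Astar Φ 𝒯 H p₀ tr x = hgoodex.choose := by
      unfold Astar; rw [dif_pos hgoodex]
    have hgood : GoodP Φ (stateClass 𝒯 tr) (H ∪ revealed tr) x
        ((DFFdim Φ (stateClass 𝒯 tr) (H ∪ revealed tr)).toNat)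
        (Astar Φ 𝒯 H p₀ tr x) := by
      rw [hA]; exact hgoodex.choose_spec.2
    set p := Astar Φ 𝒯 H p₀ tr x with hpdef
    have hlabp : T.label p.1 = p.2 := h2 p hpmem
    have hlabne : T.label x ≠ p.2 := fun h => hc h.symm
    obtain ⟨φ, hφΦ, hfb, -, -⟩ :=
      T.feedback_spec x p.1 (by rw [hlabp]; exact hlabne)
    rw [dffStep, if_neg hc, hfb]
    rw [stateClass_append_mistake, revealed_append_mistake, dffMistakes_append_mistake,
      Set.union_insert]
    have hmemC' : T ∈ TRestrict (stateClass 𝒯 tr) x p.1 (T.label x) φ := ⟨h1, rfl, hfb⟩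
    have hcons' : ConsistentH T (insert (x, T.label x) (H ∪ revealed tr)) := by
      rintro q (rfl | hq)
      · rfl
      · exact h2 q hq
    refine ⟨hmemC', hcons', ?_⟩
    have hnot := hgood (T.label x) φ hlabne hφΦ
    set n := (DFFdim Φ (stateClass 𝒯 tr) (H ∪ revealed tr)).toNat with hndef
    have hsh0 : ShatteredDFFT Φ (TRestrict (stateClass 𝒯 tr) x p.1 (T.label x) φ)
        (insert (x, T.label x) (H ∪ revealed tr)) 0 := .leaf _ _ ⟨T, hmemC', hcons'⟩
    obtain ⟨k, hk⟩ : ∃ k, n = k + 1 := by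
      have hn0 : n ≠ 0 := by
        intro h0
        rw [h0] at hnot
        exact hnot hsh0
      exact ⟨n - 1, by omega⟩
    have hD' : DFFdim Φ (TRestrict (stateClass 𝒯 tr) x p.1 (T.label x) φ)
        (insert (x, T.label x) (H ∪ revealed tr)) ≤ (k : ℕ∞) :=
      DFFdim_le (Set.insert_nonempty _ _) (by rw [← hk]; exact hnot)
    calc DFFdim Φ (TRestrict (stateClass 𝒯 tr) x p.1 (T.label x) φ)
          (insert (x, T.label x) (H ∪ revealed tr)) + ↑(dffMistakes tr + 1)
        ≤ (k : ℕ∞) + ↑(dffMistakes tr + 1) := add_le_add_left hD' _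
      _ = ((k + (dffMistakes tr + 1) : ℕ) : ℕ∞) := by push_cast; ring
      _ = ((n + dffMistakes tr : ℕ) : ℕ∞) := by rw [hk]; ring_nf
      _ = (n : ℕ∞) + (dffMistakes tr : ℕ∞) := by push_cast; ring
      _ = DFFdim Φ (stateClass 𝒯 tr) (H ∪ revealed tr) + ↑(dffMistakes tr) := by rw [hn]
      _ ≤ (d₀ : ℕ∞) := h3

end Aux3

section Aux4
variable {X Y : Type} {Φ : Set (X → Bool)}

lemma run_inv [Nonempty Y] {𝒯 : Set (Teacher X Y Φ)} {H : Set (X × Y)}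
    (hH : H.Nonempty) {p₀ : X × Y} (hp₀ : p₀ ∈ H) (T : Teacher X Y Φ) {d₀ : ℕ}
    (hT : T ∈ 𝒯) (hTc : ConsistentH T H)
    (hdim : DFFdim Φ 𝒯 H ≤ (d₀ : ℕ∞)) (xs : List X) :
    T ∈ stateClass 𝒯 (dffRun (Astar Φ 𝒯 H p₀) T xs) ∧
    ConsistentH T (H ∪ revealed (dffRun (Astar Φ 𝒯 H p₀) T xs)) ∧
    DFFdim Φ (stateClass 𝒯 (dffRun (Astar Φ 𝒯 H p₀) T xs))
        (H ∪ revealed (dffRun (Astar Φ 𝒯 H p₀) T xs))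
      + dffMistakes (dffRun (Astar Φ 𝒯 H p₀) T xs) ≤ (d₀ : ℕ∞) := by
  have base : T ∈ stateClass 𝒯 ([] : DFFTranscript X Y) ∧
      ConsistentH T (H ∪ revealed ([] : DFFTranscript X Y)) ∧
      DFFdim Φ (stateClass 𝒯 ([] : DFFTranscript X Y))
          (H ∪ revealed ([] : DFFTranscript X Y))
        + dffMistakes ([] : DFFTranscript X Y) ≤ (d₀ : ℕ∞) := by
    rw [stateClass_nil, revealed_nil, Set.union_empty]
    exact ⟨hT, hTc, by simpa [dffMistakes] using hdim⟩
  have main : ∀ (ys : List X) (tr : DFFTranscript X Y),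
      (T ∈ stateClass 𝒯 tr ∧ ConsistentH T (H ∪ revealed tr) ∧
        DFFdim Φ (stateClass 𝒯 tr) (H ∪ revealed tr) + dffMistakes tr ≤ (d₀ : ℕ∞)) →
      (T ∈ stateClass 𝒯 (ys.foldl (dffStep (Astar Φ 𝒯 H p₀) T) tr) ∧
        ConsistentH T (H ∪ revealed (ys.foldl (dffStep (Astar Φ 𝒯 H p₀) T) tr)) ∧
        DFFdim Φ (stateClass 𝒯 (ys.foldl (dffStep (Astar Φ 𝒯 H p₀) T) tr))
            (H ∪ revealed (ys.foldl (dffStep (Astar Φ 𝒯 H p₀) T) tr))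
          + dffMistakes (ys.foldl (dffStep (Astar Φ 𝒯 H p₀) T) tr) ≤ (d₀ : ℕ∞)) := by
    intro ys
    induction ys with
    | nil => intro tr h; exact h
    | cons a ys ih =>
      intro tr h
      exact ih _ (step_inv hH hp₀ T tr a h.1 h.2.1 h.2.2)
  exact main xs [] base

lemma MBound_Astar_le [Nonempty Y] {𝒯 : Set (Teacher X Y Φ)} {H : Set (X × Y)}
    (hH : H.Nonempty) {p₀ : X × Y} (hp₀ : p₀ ∈ H) {d₀ : ℕ}
    (hdim : DFFdim Φ 𝒯 H ≤ (d₀ : ℕ∞)) :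
    MBound (Astar Φ 𝒯 H p₀) 𝒯 H ≤ (d₀ : ℕ∞) := by
  apply sSup_le
  rintro m ⟨T, hT, hTc, xs, rfl⟩
  obtain ⟨-, -, h3⟩ := run_inv hH hp₀ T hT hTc hdim xs
  calc (dffMistakes (dffRun (Astar Φ 𝒯 H p₀) T xs) : ℕ∞)
      ≤ DFFdim Φ (stateClass 𝒯 (dffRun (Astar Φ 𝒯 H p₀) T xs))
          (H ∪ revealed (dffRun (Astar Φ 𝒯 H p₀) T xs))
        + dffMistakes (dffRun (Astar Φ 𝒯 H p₀) T xs) := le_add_self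
    _ ≤ (d₀ : ℕ∞) := h3

lemma Astar_legal {𝒯 : Set (Teacher X Y Φ)} {H : Set (X × Y)}
    {p₀ : X × Y} (hp₀ : p₀ ∈ H) : LegalAlg (Astar Φ 𝒯 H p₀) 𝒯 H :=
  fun T _ _ xs x => Astar_mem Φ 𝒯 H hp₀ (dffRun (Astar Φ 𝒯 H p₀) T xs) x

lemma lb_aux {𝒯 : Set (Teacher X Y Φ)} {H : Set (X × Y)} (hH : H.Nonempty)
    (A : DFFAlg X Y) (hA : LegalAlg A 𝒯 H) :
    ∀ {𝒯' : Set (Teacher X Y Φ)} {H' : Set (X × Y)} {n : ℕ},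
      ShatteredDFFT Φ 𝒯' H' n →
      ∀ (xs : List X) (tr : DFFTranscript X Y), 𝒯' ⊆ 𝒯 →
      (∀ T ∈ 𝒯', dffRun A T xs = tr) → H' = H ∪ revealed tr →
      ∃ T ∈ 𝒯, ConsistentH T H ∧
        ∃ xs' : List X, dffMistakes tr + n ≤ dffMistakes (dffRun A T xs') := by
  intro 𝒯' H' n h
  induction h with
  | leaf C Hc h =>
    intro xs tr hsub hrun hHeq
    obtain ⟨T, hT, hTc⟩ := h
    refine ⟨T, hsub hT, fun p hp => hTc p (by rw [hHeq]; exact Or.inl hp), xs, ?_⟩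
    rw [hrun T hT]; omega
  | node C Hc d x y φ hney hΦ h ih =>
    intro xs tr hsub hrun hHeq
    -- get a witness teacher to invoke legality
    have hHcne : Hc.Nonempty := by
      rw [hHeq]; exact hH.mono Set.subset_union_left
    obtain ⟨T₀, hT₀, hT₀c⟩ :=
      shattered_consistent (ShatteredDFFT.node C Hc d x y φ hney hΦ h) hHcne
    have hT₀H : ConsistentH T₀ H := fun p hp =>
      hT₀c p (by rw [hHeq]; exact Or.inl hp)
    have hpmem : A tr x ∈ Hc := by
      have := hA T₀ (hsub hT₀) hT₀H xs x
      rw [hrun T₀ hT₀] at this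
      rw [hHeq]; exact this
    set p := A tr x with hpdef
    have hyp := hney p hpmem
    have hφp := hΦ p hpmem
    -- the restricted class after this round
    set tr' := tr ++ [(x, p.1, p.2, some (y p, some (φ p)))] with htr'
    have hrun' : ∀ T ∈ TRestrict C x p.1 (y p) (φ p), dffRun A T (xs ++ [x]) = tr' := by
      rintro T ⟨hTC, hTl, hTf⟩
      rw [dffRun_concat, hrun T hTC, dffStep, if_neg (by rw [← hpdef, hTl]; exact fun he => hyp he.symm),
        ← hpdef, hTl, hTf]
    have hHeq' : insert (x, y p) Hc = H ∪ revealed tr' := by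
      rw [htr', revealed_append_mistake, Set.union_insert, hHeq]
    obtain ⟨T, hT, hTc, xs', hle⟩ := ih p hpmem (xs ++ [x]) tr'
      (fun T hT => hsub hT.1) hrun' hHeq'
    refine ⟨T, hT, hTc, xs', ?_⟩
    rw [htr', dffMistakes_append_mistake] at hle
    omega

end Aux4

/-- **Theorem (realizable DFF mistake bound).** Let `𝒯` be a teacher class
over `(X, Y, Φ)` (with `Y` a finite label set) and let `H` be a nonempty
history consistent with `𝒯`.  Then the minimum, over all deterministic DFF
algorithms (legal for `(𝒯, H)`), of the worst-case mistake bound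
`M(𝒜, 𝒯, H)` equals `DFFdim(𝒯, H)`. -/
theorem dff_optimal_mistake_bound_eq_DFFdim {X Y : Type} [Finite Y]
    (Φ : Set (X → Bool)) (𝒯 : Set (Teacher X Y Φ)) (H : Set (X × Y))
    (hH : H.Nonempty) (hcons : ∃ T ∈ 𝒯, ConsistentH T H) :
    sInf {m : ℕ∞ | ∃ A : DFFAlg X Y, LegalAlg A 𝒯 H ∧ m = MBound A 𝒯 H} =
      DFFdim Φ 𝒯 H := by
  obtain ⟨p₀, hp₀⟩ := hH
  have hH : H.Nonempty := ⟨p₀, hp₀⟩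
  haveI : Nonempty Y := ⟨p₀.2⟩
  apply le_antisymm
  · by_cases htop : DFFdim Φ 𝒯 H = ⊤
    · rw [htop]; exact le_top
    · obtain ⟨d₀, hd₀⟩ : ∃ d₀ : ℕ, DFFdim Φ 𝒯 H = (d₀ : ℕ∞) :=
        ⟨(DFFdim Φ 𝒯 H).toNat, (ENat.coe_toNat htop).symm⟩
      calc sInf {m : ℕ∞ | ∃ A : DFFAlg X Y, LegalAlg A 𝒯 H ∧ m = MBound A 𝒯 H}
          ≤ MBound (Astar Φ 𝒯 H p₀) 𝒯 H :=
            sInf_le ⟨Astar Φ 𝒯 H p₀, Astar_legal hp₀, rfl⟩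
        _ ≤ (d₀ : ℕ∞) := MBound_Astar_le hH hp₀ (le_of_eq hd₀)
        _ = DFFdim Φ 𝒯 H := hd₀.symm
  · apply le_sInf
    rintro m ⟨A, hA, rfl⟩
    apply sSup_le
    rintro d ⟨n, rfl, hsh⟩
    obtain ⟨T, hT, hTc, xs', hle⟩ := lb_aux hH A hA hsh [] [] (fun _ h => h)
      (fun T _ => rfl) (by rw [revealed_nil, Set.union_empty])
    calc (n : ℕ∞) ≤ (dffMistakes (dffRun A T xs') : ℕ∞) := by
          exact_mod_cast (by simpa [dffMistakes] using hle : n ≤ dffMistakes (dffRun A T xs'))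
      _ ≤ MBound A 𝒯 H := le_sSup ⟨T, hT, hTc, xs', rfl⟩
end

section
/- Let 𝒯 be a teacher class over (X,Y,Φ) and let H be a nonempty history consistent with 𝒯. Then there exists a deterministic DFF algorithm 𝒜 such that M(𝒜,𝒯,H) ≤ DFFdim(𝒯,H). -/
open scoped Classical

section Aux

variable {X Y : Type} {Φ : Set (X → Bool)}

/-- Monotonicity of shattering: enlarging the class and shrinking the history
preserves shattering. -/
lemma shattered_mono_s1 {𝒯₁ 𝒯₂ : Set (Teacher X Y Φ)} {H₁ H₂ : Set (X × Y)} {d : ℕ}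
    (h : ShatteredDFFT Φ 𝒯₁ H₁ d) (hT : 𝒯₁ ⊆ 𝒯₂) (hH : H₂ ⊆ H₁) :
    ShatteredDFFT Φ 𝒯₂ H₂ d := by
  induction h generalizing 𝒯₂ H₂ with
  | leaf 𝒯 H hc =>
    obtain ⟨T, hT1, hT2⟩ := hc
    exact ShatteredDFFT.leaf _ _ ⟨T, hT hT1, fun p hp => hT2 p (hH hp)⟩
  | node 𝒯 H d x y φ hne hΦ h ih =>
    refine ShatteredDFFT.node _ _ _ x y φ (fun p hp => hne p (hH hp))
      (fun p hp => hΦ p (hH hp)) (fun p hp => ?_)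
    refine ih p (hH hp) ?_ ?_
    · rintro T ⟨h1, h2, h3⟩; exact ⟨hT h1, h2, h3⟩
    · exact Set.insert_subset_insert hH

lemma shattered_succ {𝒯 : Set (Teacher X Y Φ)} {H : Set (X × Y)} {d : ℕ}
    (hH : H.Nonempty) (h : ShatteredDFFT Φ 𝒯 H (d + 1)) : ShatteredDFFT Φ 𝒯 H d := by
  cases h with
  | node 𝒯 H d x y φ hne hΦ h =>
    exact shattered_mono_s1 (h hH.choose hH.choose_spec)
      (fun T hT => hT.1) (Set.subset_insert _ _)

lemma shattered_of_le {𝒯 : Set (Teacher X Y Φ)} {H : Set (X × Y)} {d e : ℕ}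
    (hH : H.Nonempty) (h : ShatteredDFFT Φ 𝒯 H d) (he : e ≤ d) :
    ShatteredDFFT Φ 𝒯 H e := by
  induction d with
  | zero => exact (Nat.le_zero.mp he) ▸ h
  | succ d ih =>
    rcases Nat.eq_or_lt_of_le he with rfl | hlt
    · exact h
    · exact ih (shattered_succ hH h) (Nat.lt_succ_iff.mp hlt)

lemma shattered_le_dim {𝒯 : Set (Teacher X Y Φ)} {H : Set (X × Y)} {n : ℕ}
    (h : ShatteredDFFT Φ 𝒯 H n) : (n : ℕ∞) ≤ DFFdim Φ 𝒯 H :=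
  le_sSup ⟨n, rfl, h⟩

lemma dim_le {𝒯 : Set (Teacher X Y Φ)} {H : Set (X × Y)} {c : ℕ∞}
    (h : ∀ n : ℕ, ShatteredDFFT Φ 𝒯 H n → (n : ℕ∞) ≤ c) : DFFdim Φ 𝒯 H ≤ c := by
  refine sSup_le ?_
  rintro d ⟨n, rfl, hn⟩
  exact h n hn

lemma dim_mono {𝒯₁ 𝒯₂ : Set (Teacher X Y Φ)} {H₁ H₂ : Set (X × Y)}
    (hT : 𝒯₁ ⊆ 𝒯₂) (hH : H₂ ⊆ H₁) : DFFdim Φ 𝒯₁ H₁ ≤ DFFdim Φ 𝒯₂ H₂ :=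
  dim_le fun _ hn => shattered_le_dim (shattered_mono_s1 hn hT hH)

/-- If a tree of height `n+1` is not shattered, then for every example `x`
some explanation pair of `H` defeats all feedbacks at height `n`. -/
lemma exists_good_s1 {𝒯 : Set (Teacher X Y Φ)} {H : Set (X × Y)} {n : ℕ}
    (hH : H.Nonempty) (hns : ¬ ShatteredDFFT Φ 𝒯 H (n + 1)) (x : X) :
    ∃ p ∈ H, ∀ y φ, y ≠ p.2 → φ ∈ Φ →
      ¬ ShatteredDFFT Φ (TRestrict 𝒯 x p.1 y φ) (insert (x, y) H) n := by
  by_contra hc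
  push_neg at hc
  have hY : Nonempty Y := ⟨hH.choose.2⟩
  choose! y φ hy hφ hs using hc
  exact hns (ShatteredDFFT.node 𝒯 H n x y φ hy hφ hs)

/-- The class-restriction step associated to one transcript entry. -/
def classStep (𝒯 : Set (Teacher X Y Φ))
    (e : X × X × Y × Option (Y × Option (X → Bool))) : Set (Teacher X Y Φ) :=
  match e with
  | (x, xh, _, some (y, some φ)) => TRestrict 𝒯 x xh y φ
  | _ => 𝒯

/-- The teacher class restricted along a transcript. -/
def classOf (𝒯 : Set (Teacher X Y Φ)) (tr : DFFTranscript X Y) :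
    Set (Teacher X Y Φ) :=
  tr.foldl classStep 𝒯

lemma classOf_append (𝒯 : Set (Teacher X Y Φ)) (tr : DFFTranscript X Y) (e) :
    classOf 𝒯 (tr ++ [e]) = classStep (classOf 𝒯 tr) e := by
  simp [classOf]

lemma revealed_append {tr : DFFTranscript X Y} {e} :
    revealed (tr ++ [e]) = revealed tr ∪ revealed [e] := by
  ext p
  simp only [revealed, Set.mem_setOf_eq, List.mem_append, Set.mem_union, List.mem_singleton]
  constructor
  · rintro ⟨a, ha | ha, h⟩
    · exact Or.inl ⟨a, ha, h⟩
    · exact Or.inr ⟨a, ha, h⟩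
  · rintro (⟨a, ha, h⟩ | ⟨a, ha, h⟩)
    · exact ⟨a, Or.inl ha, h⟩
    · exact ⟨a, Or.inr ha, h⟩

lemma revealed_none (x xh : X) (yh : Y) :
    revealed ([(x, xh, yh, none)] : DFFTranscript X Y) = {(x, yh)} := by
  ext p
  simp only [revealed, Set.mem_setOf_eq, List.mem_singleton, Set.mem_singleton_iff]
  constructor
  · rintro ⟨a, ha, h1, (⟨_, h3⟩ | ⟨φ, h⟩)⟩
    · subst ha; cases p; simp_all [Prod.ext_iff]
    · subst ha; simp at h
  · rintro rfl; exact ⟨(x, xh, yh, none), rfl, rfl, Or.inl ⟨rfl, rfl⟩⟩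

lemma revealed_some (x xh : X) (yh : Y) (y : Y) (φo : Option (X → Bool)) :
    revealed ([(x, xh, yh, some (y, φo))] : DFFTranscript X Y) = {(x, y)} := by
  ext p
  simp only [revealed, Set.mem_setOf_eq, List.mem_singleton, Set.mem_singleton_iff]
  constructor
  · rintro ⟨a, ha, h1, (⟨h2, _⟩ | ⟨φ, h⟩)⟩
    · subst ha; simp at h2
    · subst ha; simp only [Option.some.injEq, Prod.mk.injEq] at h
      cases p; simp_all [Prod.ext_iff]
  · rintro rfl; exact ⟨(x, xh, yh, some (y, φo)), rfl, rfl, Or.inr ⟨φo, rfl⟩⟩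

/-- The SOA-style DFF algorithm for `(Φ, 𝒯, H)` with fallback `p0`. -/
noncomputable def soa (Φ : Set (X → Bool)) (𝒯 : Set (Teacher X Y Φ))
    (H : Set (X × Y)) (p0 : X × Y) : DFFAlg X Y := fun tr x =>
  if h : ∃ p ∈ H ∪ revealed tr, ∀ y φ, y ≠ p.2 → φ ∈ Φ →
      ¬ ShatteredDFFT Φ (TRestrict (classOf 𝒯 tr) x p.1 y φ)
        (insert (x, y) (H ∪ revealed tr))
        (DFFdim Φ (classOf 𝒯 tr) (H ∪ revealed tr)).toNat
  then h.choose else p0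

lemma soa_mem {𝒯 : Set (Teacher X Y Φ)} {H : Set (X × Y)} {p0 : X × Y}
    (hp0 : p0 ∈ H) (tr : DFFTranscript X Y) (x : X) :
    soa Φ 𝒯 H p0 tr x ∈ H ∪ revealed tr := by
  unfold soa
  split
  · next h => exact h.choose_spec.1
  · exact Or.inl hp0

end Aux


/-- Main invariant of the SOA-DFF run: the true teacher stays in the current
class and consistent with the current history, and mistakes plus current
dimension are bounded by the initial dimension. -/
lemma soa_invariant {X Y : Type} {Φ : Set (X → Bool)} {𝒯 : Set (Teacher X Y Φ)}
    {H : Set (X × Y)} (hH : H.Nonempty) {p0 : X × Y} (hp0 : p0 ∈ H)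
    (hD : DFFdim Φ 𝒯 H ≠ ⊤) (T : Teacher X Y Φ) (hT : T ∈ 𝒯)
    (hc : ConsistentH T H) (xs : List X) :
    T ∈ classOf 𝒯 (dffRun (soa Φ 𝒯 H p0) T xs) ∧
    ConsistentH T (H ∪ revealed (dffRun (soa Φ 𝒯 H p0) T xs)) ∧
    (dffMistakes (dffRun (soa Φ 𝒯 H p0) T xs) : ℕ∞) +
      DFFdim Φ (classOf 𝒯 (dffRun (soa Φ 𝒯 H p0) T xs))
        (H ∪ revealed (dffRun (soa Φ 𝒯 H p0) T xs)) ≤ DFFdim Φ 𝒯 H := by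
  set A := soa Φ 𝒯 H p0 with hAdef
  induction xs using List.reverseRecOn with
  | nil =>
    have h1 : dffRun A T [] = [] := rfl
    rw [h1]
    have h2 : revealed ([] : DFFTranscript X Y) = ∅ := by
      ext p; simp [revealed]
    rw [h2]
    simp only [Set.union_empty]
    refine ⟨hT, hc, ?_⟩
    simp [dffMistakes, classOf]
  | append_singleton xs x ih =>
    obtain ⟨ih1, ih2, ih3⟩ := ih
    set tr := dffRun A T xs with htr
    have hrun : dffRun A T (xs ++ [x]) = dffStep A T tr x := by
      simp [dffRun, htr, List.foldl_append]
    set H' := H ∪ revealed tr with hH'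
    have hH'ne : H'.Nonempty := ⟨p0, Or.inl hp0⟩
    set d' := DFFdim Φ (classOf 𝒯 tr) H' with hd'
    have hd'top : d' ≠ ⊤ := by
      intro h
      rw [h] at ih3
      simp [add_top] at ih3
      exact hD (top_le_iff.mp (le_of_eq ih3.symm) |>.symm ▸ rfl)
    by_cases hcor : (A tr x).2 = T.label x
    · -- correct round
      have hstep : dffStep A T tr x = tr ++ [(x, (A tr x).1, (A tr x).2, none)] := by
        rw [dffStep, if_pos hcor]
      rw [hrun, hstep]
      have hcls : classOf 𝒯 (tr ++ [(x, (A tr x).1, (A tr x).2, none)])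
          = classOf 𝒯 tr := by
        rw [classOf_append]; rfl
      have hrev : H ∪ revealed (tr ++ [(x, (A tr x).1, (A tr x).2, none)])
          = insert (x, (A tr x).2) H' := by
        rw [revealed_append, revealed_none, ← Set.union_assoc, Set.union_singleton]
      rw [hcls, hrev]
      refine ⟨ih1, ?_, ?_⟩
      · rintro p (rfl | hp)
        · exact hcor.symm
        · exact ih2 p hp
      · have hmk : dffMistakes (tr ++ [(x, (A tr x).1, (A tr x).2, none)])
            = dffMistakes tr := by
          simp [dffMistakes]
        rw [hmk]
        calc (dffMistakes tr : ℕ∞) + DFFdim Φ (classOf 𝒯 tr) (insert (x, (A tr x).2) H')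
            ≤ (dffMistakes tr : ℕ∞) + d' :=
              add_le_add_right (dim_mono (le_refl _) (Set.subset_insert _ _)) _
          _ ≤ DFFdim Φ 𝒯 H := ih3
    · -- mistake round
      have hn1 : ¬ ShatteredDFFT Φ (classOf 𝒯 tr) H' (d'.toNat + 1) := by
        intro hs
        have hle := shattered_le_dim hs
        rw [← hd'] at hle
        have hle2 : ((d'.toNat + 1 : ℕ) : ℕ∞) ≤ ((d'.toNat : ℕ) : ℕ∞) :=
          le_trans hle (ENat.coe_toNat hd'top).symm.le
        have := Nat.cast_le.mp hle2
        omega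
      have hgood : ∃ p ∈ H', ∀ y φ, y ≠ p.2 → φ ∈ Φ →
          ¬ ShatteredDFFT Φ (TRestrict (classOf 𝒯 tr) x p.1 y φ)
            (insert (x, y) H') d'.toNat :=
        exists_good_s1 hH'ne hn1 x
      have hA : A tr x = hgood.choose := by
        rw [hAdef]
        show (if h : _ then Exists.choose h else p0) = _
        rw [dif_pos hgood]
      set p := hgood.choose with hpdef
      have hpmem : p ∈ H' := hgood.choose_spec.1
      have hpgood : ∀ (y : Y) (φ : X → Bool), y ≠ p.2 → φ ∈ Φ →
          ¬ ShatteredDFFT Φ (TRestrict (classOf 𝒯 tr) x p.1 y φ)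
            (insert (x, y) H') d'.toNat := hgood.choose_spec.2
      set y := T.label x with hy
      have hyne : y ≠ p.2 := by
        intro h
        exact hcor (by rw [hA, ← h])
      have hlblp : T.label p.1 = p.2 := ih2 p hpmem
      obtain ⟨φ, hφΦ, hfb, _, _⟩ := T.feedback_spec x p.1 (by rw [hlblp]; exact hyne)
      have hstep : dffStep A T tr x = tr ++ [(x, p.1, p.2, some (y, some φ))] := by
        rw [dffStep, if_neg hcor, hA, ← hy, hfb]
      rw [hrun, hstep]
      have hcls : classOf 𝒯 (tr ++ [(x, p.1, p.2, some (y, some φ))])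
          = TRestrict (classOf 𝒯 tr) x p.1 y φ := by
        rw [classOf_append]; rfl
      have hrev : H ∪ revealed (tr ++ [(x, p.1, p.2, some (y, some φ))])
          = insert (x, y) H' := by
        rw [revealed_append, revealed_some, ← Set.union_assoc, Set.union_singleton]
      rw [hcls, hrev]
      have hTnew : T ∈ TRestrict (classOf 𝒯 tr) x p.1 y φ := ⟨ih1, rfl, hfb⟩
      have hcons' : ConsistentH T (insert (x, y) H') := by
        rintro q (rfl | hq)
        · rfl
        · exact ih2 q hq
      refine ⟨hTnew, hcons', ?_⟩
      have h0 : ShatteredDFFT Φ (TRestrict (classOf 𝒯 tr) x p.1 y φ)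
          (insert (x, y) H') 0 := ShatteredDFFT.leaf _ _ ⟨T, hTnew, hcons'⟩
      have hn0 : d'.toNat ≠ 0 := by
        intro h
        exact hpgood y φ hyne hφΦ (h ▸ h0)
      obtain ⟨k, hk⟩ := Nat.exists_eq_succ_of_ne_zero hn0
      have hdimnew : DFFdim Φ (TRestrict (classOf 𝒯 tr) x p.1 y φ)
          (insert (x, y) H') ≤ (k : ℕ∞) := by
        refine dim_le fun e he => ?_
        have hek : e ≤ k := by
          by_contra hek
          push_neg at hek
          exact hpgood y φ hyne hφΦ
            (shattered_of_le ⟨(x, y), Set.mem_insert _ _⟩ he (by omega))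
        exact_mod_cast hek
      have hmk : (dffMistakes (tr ++ [(x, p.1, p.2, some (y, some φ))]) : ℕ∞)
          = (dffMistakes tr : ℕ∞) + 1 := by
        simp [dffMistakes]
      rw [hmk]
      calc (dffMistakes tr : ℕ∞) + 1 + DFFdim Φ (TRestrict (classOf 𝒯 tr) x p.1 y φ)
            (insert (x, y) H')
          ≤ (dffMistakes tr : ℕ∞) + 1 + (k : ℕ∞) := add_le_add_right hdimnew _
        _ = (dffMistakes tr : ℕ∞) + ((k : ℕ∞) + 1) := by ring
        _ = (dffMistakes tr : ℕ∞) + d' := by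
              have hk' : (k : ℕ∞) + 1 = d' := by
                rw [← ENat.coe_toNat hd'top]
                exact_mod_cast congrArg (Nat.cast : ℕ → ℕ∞) (by omega : k + 1 = d'.toNat)
              rw [hk']
        _ ≤ DFFdim Φ 𝒯 H := ih3

/-- **Lemma (upper bound, SOA-DFF).** Let `𝒯` be a teacher class over
`(X, Y, Φ)` (with `Y` a finite label set) and let `H` be a nonempty history
consistent with `𝒯`.  Then there exists a deterministic DFF algorithm `𝒜`
(legal for `(𝒯, H)`) with `M(𝒜, 𝒯, H) ≤ DFFdim(𝒯, H)`. -/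
theorem exists_dff_alg_mistakes_le_DFFdim {X Y : Type} [Finite Y]
    (Φ : Set (X → Bool)) (𝒯 : Set (Teacher X Y Φ)) (H : Set (X × Y))
    (hH : H.Nonempty) (hcons : ∃ T ∈ 𝒯, ConsistentH T H) :
    ∃ A : DFFAlg X Y, LegalAlg A 𝒯 H ∧ MBound A 𝒯 H ≤ DFFdim Φ 𝒯 H := by
  refine ⟨soa Φ 𝒯 H hH.choose, ?_, ?_⟩
  · intro T hT hc xs x
    exact soa_mem hH.choose_spec _ _
  · rcases eq_or_ne (DFFdim Φ 𝒯 H) ⊤ with htop | htop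
    · rw [htop]; exact le_top
    · refine sSup_le ?_
      rintro m ⟨T, hT, hc, xs, rfl⟩
      have inv := soa_invariant hH hH.choose_spec htop T hT hc xs
      exact le_trans le_self_add inv.2.2
end

section
/- Let 𝒯 be a teacher class over (X,Y,Φ) and let H be a nonempty history consistent with 𝒯. Then for every deterministic DFF algorithm 𝒜 we have M(𝒜,𝒯,H) ≥ DFFdim(𝒯,H); that is, there exist a finite sequence of examples and feedback consistent with some teacher in 𝒯_H on which 𝒜 makes at least DFFdim(𝒯,H) mistakes. -/
open scoped Classical

/-- A shattered DFF tree over a nonempty history witnesses a consistent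
teacher in the class. -/
lemma shattered_nonempty {X Y : Type} {Φ : Set (X → Bool)}
    {𝒯 : Set (Teacher X Y Φ)} {H : Set (X × Y)} {d : ℕ}
    (h : ShatteredDFFT Φ 𝒯 H d) (hH : H.Nonempty) :
    ∃ T ∈ 𝒯, ConsistentH T H := by
  induction h with
  | leaf 𝒯 H h => exact h
  | node 𝒯 H d x y φ hne hΦ h ih =>
    obtain ⟨p, hp⟩ := hH
    obtain ⟨T, hT, hTc⟩ := ih p hp ⟨(x, y p), Set.mem_insert _ _⟩
    exact ⟨T, hT.1, fun q hq => hTc q (Set.mem_insert_of_mem _ hq)⟩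

/-- Adversary argument: from a shattered tree of height `d` and a transcript
produced identically by all teachers of the current class, force `d` more
mistakes. -/
lemma dff_adversary {X Y : Type} {Φ : Set (X → Bool)}
    (𝒯 : Set (Teacher X Y Φ)) (H : Set (X × Y)) (hH : H.Nonempty)
    (A : DFFAlg X Y) (hA : LegalAlg A 𝒯 H)
    {𝒯c : Set (Teacher X Y Φ)} {H' : Set (X × Y)} {d : ℕ}
    (hsh : ShatteredDFFT Φ 𝒯c H' d) :
    ∀ xs tr, 𝒯c ⊆ 𝒯 → H ⊆ H' → revealed tr ⊆ H' →
    (∀ T ∈ 𝒯c, dffRun A T xs = tr) →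
    ∃ T, T ∈ 𝒯c ∧ ConsistentH T H' ∧
      ∃ ys, dffMistakes tr + d ≤ dffMistakes (dffRun A T (xs ++ ys)) := by
  induction hsh with
  | leaf 𝒯c H' h =>
    intro xs tr hsub hHH hrev hrun
    obtain ⟨T, hT, hTc⟩ := h
    exact ⟨T, hT, hTc, [], by simp [hrun T hT]⟩
  | node 𝒯c H' d x y φ hne hΦ h ih =>
    intro xs tr hsub hHH hrev hrun
    obtain ⟨p0, hp0⟩ : H'.Nonempty := hH.mono hHH
    obtain ⟨T0, hT0, hT0c⟩ := shattered_nonempty (h p0 hp0)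
        ⟨(x, y p0), Set.mem_insert _ _⟩
    have hT0𝒯c : T0 ∈ 𝒯c := hT0.1
    have hT0H : ConsistentH T0 H := fun q hq =>
      hT0c q (Set.mem_insert_of_mem _ (hHH hq))
    have hp : A tr x ∈ H' := by
      have hleg := hA T0 (hsub hT0𝒯c) hT0H xs x
      rw [hrun T0 hT0𝒯c] at hleg
      rcases hleg with h1 | h1
      · exact hHH h1
      · exact hrev h1
    set p := A tr x with hpdef
    set tr' := tr ++ [(x, p.1, p.2, some (y p, some (φ p)))] with htr'
    have hrun' : ∀ T ∈ TRestrict 𝒯c x p.1 (y p) (φ p),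
        dffRun A T (xs ++ [x]) = tr' := by
      intro T hT
      have h1 : dffRun A T (xs ++ [x]) = dffStep A T (dffRun A T xs) x := by
        simp [dffRun, List.foldl_append]
      rw [h1, hrun T hT.1]
      have hlab : T.label x = y p := hT.2.1
      have hfb : T.feedback x p.1 = some (φ p) := hT.2.2
      have hne' : p.2 ≠ T.label x := by
        rw [hlab]; exact fun hc => hne p hp hc.symm
      rw [dffStep, if_neg (by exact hne'), htr', hlab, hfb]
    have hrev' : revealed tr' ⊆ insert (x, y p) H' := by
      rintro q ⟨e, he, he1, h2⟩
      rw [htr', List.mem_append, List.mem_singleton] at he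
      rcases he with he | rfl
      · exact Set.mem_insert_of_mem _ (hrev ⟨e, he, he1, h2⟩)
      · rcases h2 with ⟨hnone, _⟩ | ⟨φ', hsome⟩
        · simp at hnone
        · simp only [Option.some.injEq, Prod.mk.injEq] at hsome
          have hq : q = (x, y p) := by
            have := hsome.1
            exact Prod.ext he1.symm this.symm
          rw [hq]; exact Set.mem_insert _ _
    obtain ⟨T, hT, hTc, ys, hle⟩ := ih p hp (xs ++ [x]) tr'
      (fun T hT => hsub hT.1)
      (fun q hq => Set.mem_insert_of_mem _ (hHH hq))
      hrev' hrun'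
    refine ⟨T, hT.1, fun q hq => hTc q (Set.mem_insert_of_mem _ hq),
      x :: ys, ?_⟩
    have hmis : dffMistakes tr' = dffMistakes tr + 1 := by
      simp [dffMistakes, htr', List.countP_append, List.countP_cons]
    have happ : xs ++ x :: ys = (xs ++ [x]) ++ ys := by simp
    rw [happ]
    omega

/-- **Lemma (lower bound).** Let `𝒯` be a teacher class over `(X, Y, Φ)`
(with `Y` a finite label set) and let `H` be a nonempty history consistent
with `𝒯`.  Then every deterministic DFF algorithm `𝒜` that is legal for
`(𝒯, H)` satisfies `M(𝒜, 𝒯, H) ≥ DFFdim(𝒯, H)`: the supremum over all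
finite example sequences and teachers of `𝒯` consistent with `H` of the
number of mistakes of `𝒜` is at least `DFFdim(𝒯, H)`. -/
theorem dff_alg_mistakes_ge_DFFdim {X Y : Type} [Finite Y]
    (Φ : Set (X → Bool)) (𝒯 : Set (Teacher X Y Φ)) (H : Set (X × Y))
    (hH : H.Nonempty) (hcons : ∃ T ∈ 𝒯, ConsistentH T H)
    (A : DFFAlg X Y) (hA : LegalAlg A 𝒯 H) :
    DFFdim Φ 𝒯 H ≤ MBound A 𝒯 H := by
  apply sSup_le
  rintro m ⟨n, rfl, hsh⟩
  obtain ⟨T, hT, hTc, ys, hle⟩ := dff_adversary 𝒯 H hH A hA hsh [] []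
    (subset_refl _) (subset_refl _)
    (by rintro q ⟨e, he, -⟩; simp at he)
    (fun T _ => rfl)
  have hle' : n ≤ dffMistakes (dffRun A T ys) := by
    simpa [dffMistakes] using hle
  exact le_trans (by exact_mod_cast hle')
    (le_sSup ⟨T, hT, hTc, ys, rfl⟩)
end

section
/- Let 𝒯_1 ⊆ 𝒯_2 be teacher classes over (X,Y,Φ) and let H_2 ⊆ H_1 be nonempty histories such that H_1 is consistent with 𝒯_1. Then DFFdim(𝒯_1,H_1) ≤ DFFdim(𝒯_2,H_2). -/
open scoped Classical

theorem ShatteredDFFT.mono {X Y : Type} {Φ : Set (X → Bool)} :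
    ∀ {n : ℕ} {𝒯₁ : Set (Teacher X Y Φ)} {H₁ : Set (X × Y)},
    ShatteredDFFT Φ 𝒯₁ H₁ n → ∀ {𝒯₂ : Set (Teacher X Y Φ)} {H₂ : Set (X × Y)},
    𝒯₁ ⊆ 𝒯₂ → H₂ ⊆ H₁ → ShatteredDFFT Φ 𝒯₂ H₂ n := by
  intro n 𝒯₁ H₁ h
  induction h with
  | leaf 𝒯 H h =>
    intro 𝒯₂ H₂ hT hH
    obtain ⟨T, hT', hc⟩ := h
    exact .leaf _ _ ⟨T, hT hT', fun p hp => hc p (hH hp)⟩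
  | node 𝒯 H d x y φ hne hΦ h ih =>
    intro 𝒯₂ H₂ hT hH
    exact .node _ _ d x y φ (fun p hp => hne p (hH hp)) (fun p hp => hΦ p (hH hp))
      (fun p hp => ih p (hH hp)
        (fun T hT' => ⟨hT hT'.1, hT'.2⟩)
        (Set.insert_subset_insert hH))

/-- **Lemma (monotonicity of the DFF dimension).** If `𝒯₁ ⊆ 𝒯₂` are teacher
classes over `(X, Y, Φ)` (with `Y` a finite label set) and `H₂ ⊆ H₁` are
nonempty histories such that `H₁` is consistent with `𝒯₁`, then
`DFFdim(𝒯₁, H₁) ≤ DFFdim(𝒯₂, H₂)`. -/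
theorem DFFdim_mono {X Y : Type} [Finite Y] (Φ : Set (X → Bool))
    (𝒯₁ 𝒯₂ : Set (Teacher X Y Φ)) (H₁ H₂ : Set (X × Y))
    (h𝒯 : 𝒯₁ ⊆ 𝒯₂) (hH : H₂ ⊆ H₁) (hH₂ : H₂.Nonempty)
    (hcons : ∃ T ∈ 𝒯₁, ConsistentH T H₁) :
    DFFdim Φ 𝒯₁ H₁ ≤ DFFdim Φ 𝒯₂ H₂ := by
  apply sSup_le
  rintro d ⟨n, rfl, hs⟩
  exact le_sSup ⟨n, rfl, hs.mono h𝒯 hH⟩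
end

section
/- Let L, R, M ∈ ℕ, let X be any set of examples and Φ ⊆ {0,1}^X any set of Boolean features closed under negation, and let 𝒯 be the relaxed component model teacher class with parameters (L,R,M) over (X, Y = {0,…,L}, Φ). Let H = {(x_0,0)} for some x_0 ∈ X such that 𝒯 is consistent with H. Then DFFdim(𝒯,H) ≤ R·M. -/
open scoped Classical

/-- `x` satisfies the conjunction given by a finite set `S` of features. -/
def SatAll {X : Type} (S : Finset (X → Bool)) (x : X) : Prop :=
  ∀ φ ∈ S, φ x = true

/-- Negation of a Boolean feature. -/
def negF {X : Type} (φ : X → Bool) : X → Bool := fun z => !(φ z)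

/-- The data of a relaxed component model with parameters `(L, R, M)`: a
collection of (at most) `R` subsets of `Φ`, each of size at most `M`, together
with a nonzero label for each of them. -/
structure RCMData (X : Type) (Φ : Set (X → Bool)) (L R M : ℕ) where
  S : Fin R → Finset (X → Bool)
  q : Fin R → Fin (L + 1)
  hSΦ : ∀ j, ↑(S j) ⊆ Φ
  hSM : ∀ j, (S j).card ≤ M
  hq : ∀ j, q j ≠ 0

/-- `ℓ` is the labeling function of the relaxed component model data `D`:
an example satisfying a conjunction `S j` is labeled `q j` (in particular at
most one label may arise this way), and an example satisfying no conjunction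
is labeled `0`. -/
def IsRCMLabel {X : Type} {Φ : Set (X → Bool)} {L R M : ℕ}
    (D : RCMData X Φ L R M) (ℓ : X → Fin (L + 1)) : Prop :=
  ∀ x : X, (∀ j, SatAll (D.S j) x → ℓ x = D.q j) ∧
    ((∀ j, ¬ SatAll (D.S j) x) → ℓ x = 0)

/-- `Pm` is a primary-conjunction map for `D` with labeling `ℓ`: every example
with a nonzero label is assigned a conjunction it satisfies, carrying its
label. -/
def IsPrimaryMap {X : Type} {Φ : Set (X → Bool)} {L R M : ℕ}
    (D : RCMData X Φ L R M) (ℓ : X → Fin (L + 1)) (Pm : X → Fin R) : Prop :=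
  ∀ x : X, ℓ x ≠ 0 → SatAll (D.S (Pm x)) x ∧ D.q (Pm x) = ℓ x

/-- The feature feedback `ψ` is allowed for `(D, ℓ, Pm)`: whenever
`ℓ x ≠ ℓ xh`, if `ℓ xh ≠ 0` then `ψ x xh ∈ F(x) ∩ ¬S(xh)`, and otherwise
`ψ x xh ∈ S(x) ∩ ¬F(xh)`, where `F(z) = {φ ∈ Φ | φ z}` and
`¬A = {¬φ | φ ∈ A}`. -/
def RCMFeedbackOK {X : Type} {Φ : Set (X → Bool)} {L R M : ℕ}
    (D : RCMData X Φ L R M) (ℓ : X → Fin (L + 1)) (Pm : X → Fin R)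
    (ψ : X → X → Option (X → Bool)) : Prop :=
  ∀ x xh : X, ℓ x ≠ ℓ xh → ∃ φ : X → Bool, ψ x xh = some φ ∧
    (if ℓ xh ≠ 0 then
      (φ ∈ Φ ∧ φ x = true) ∧ ∃ φ₀ ∈ D.S (Pm xh), φ = negF φ₀
    else
      φ ∈ D.S (Pm x) ∧ ∃ φ₀ : X → Bool, φ₀ ∈ Φ ∧ φ₀ xh = true ∧ φ = negF φ₀)

/-- The relaxed component model teacher class with parameters `(L, R, M)`
over `(X, {0, …, L}, Φ)`. -/
def RCMClass (X : Type) (Φ : Set (X → Bool)) (L R M : ℕ) :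
    Set (Teacher X (Fin (L + 1)) Φ) :=
  {T | ∃ (D : RCMData X Φ L R M) (Pm : X → Fin R),
    IsRCMLabel D T.label ∧ IsPrimaryMap D T.label Pm ∧
    RCMFeedbackOK D T.label Pm T.feedback}


/-- Auxiliary invariant: the constraint list `C` of triples
`(anchor, label, feature)` is *good* for the witness `(D, Pm)`: each feature
is forced to lie in the conjunction of the anchor's primary index, the pairs
`(Pm anchor, feature)` are pairwise distinct, and distinct anchors occurring
in `C` have distinct primary indices. -/
def RCMGood {X : Type} {Φ : Set (X → Bool)} {L R M : ℕ}
    (C : List (X × Fin (L + 1) × (X → Bool))) (D : RCMData X Φ L R M)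
    (Pm : X → Fin R) : Prop :=
  (∀ e ∈ C, e.2.2 ∈ D.S (Pm e.1)) ∧
  (C.map (fun e => (Pm e.1, e.2.2))).Nodup ∧
  (∀ e ∈ C, ∀ e' ∈ C, e.1 ≠ e'.1 → Pm e.1 ≠ Pm e'.1)

lemma RCM_key {X : Type} (Φ : Set (X → Bool)) (L R M : ℕ) (x₀ : X) :
    ∀ (n : ℕ) (𝒯 : Set (Teacher X (Fin (L + 1)) Φ))
      (H : Set (X × Fin (L + 1))) (C : List (X × Fin (L + 1) × (X → Bool))),
      ShatteredDFFT Φ 𝒯 H n →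
      ((x₀, (0 : Fin (L + 1))) ∈ H) →
      𝒯 ⊆ RCMClass X Φ L R M →
      (∀ e ∈ C, (e.1, e.2.1) ∈ H ∧ e.2.1 ≠ 0) →
      (∀ T ∈ 𝒯, ConsistentH T H → ∀ (D : RCMData X Φ L R M) (Pm : X → Fin R),
        IsRCMLabel D T.label →
        IsPrimaryMap D T.label Pm → RCMFeedbackOK D T.label Pm T.feedback →
        RCMGood C D Pm) →
      n + C.length ≤ R * M := by
  intro n
  induction n with
  | zero =>
    intro 𝒯 H C hsh hx₀ hsub hC hInv
    cases hsh with
    | leaf _ _ hex =>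
      obtain ⟨T, hT, hTcons⟩ := hex
      obtain ⟨D, Pm, hD1, hD2, hD3⟩ := hsub hT
      obtain ⟨hmem, hnd, -⟩ := hInv T hT hTcons D Pm hD1 hD2 hD3
      classical
      set l := C.map (fun e => (Pm e.1, e.2.2)) with hl
      have hlen : C.length = l.length := by simp [hl]
      have hsubs : l.toFinset ⊆
          Finset.univ.biUnion
            (fun j : Fin R => (D.S j).image (fun ψ => ((j, ψ) : Fin R × (X → Bool)))) := by
        intro q hq
        rw [List.mem_toFinset] at hq
        obtain ⟨e, he, rfl⟩ := List.mem_map.mp hq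
        exact Finset.mem_biUnion.mpr ⟨Pm e.1, Finset.mem_univ _,
          Finset.mem_image.mpr ⟨e.2.2, hmem e he, rfl⟩⟩
      have h1 : l.length = l.toFinset.card := (List.toFinset_card_of_nodup hnd).symm
      have h2 := Finset.card_le_card hsubs
      have h3 : (Finset.univ.biUnion
            (fun j : Fin R => (D.S j).image (fun ψ => ((j, ψ) : Fin R × (X → Bool))))).card ≤
          ∑ j : Fin R, ((D.S j).image (fun ψ => ((j, ψ) : Fin R × (X → Bool)))).card :=
        Finset.card_biUnion_le
      have h4 : ∑ j : Fin R, ((D.S j).image (fun ψ => ((j, ψ) : Fin R × (X → Bool)))).card ≤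
          ∑ _j : Fin R, M :=
        Finset.sum_le_sum fun j _ => le_trans Finset.card_image_le (D.hSM j)
      have h5 : ∑ _j : Fin R, M = R * M := by
        simp [Finset.sum_const, Finset.card_univ]
      omega
  | succ d ih =>
    intro 𝒯 H C hsh hx₀ hsub hC hInv
    cases hsh with
    | node _ _ _ x ymap φmap hne hΦ hst =>
      classical
      by_cases hB : ∃ e ∈ C, ∀ e' ∈ C, e'.1 = e.1 → e'.2.2 x = true
      · -- Case B: some anchor group is entirely true at x; query that anchor.
        obtain ⟨e, heC, hall⟩ := hB
        have hp : ((e.1, e.2.1) : X × Fin (L + 1)) ∈ H := (hC e heC).1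
        have hy0 : e.2.1 ≠ 0 := (hC e heC).2
        have key := ih (TRestrict 𝒯 x e.1 (ymap (e.1, e.2.1)) (φmap (e.1, e.2.1)))
          (insert (x, ymap (e.1, e.2.1)) H)
          ((e.1, e.2.1, negF (φmap (e.1, e.2.1))) :: C)
          (hst (e.1, e.2.1) hp)
          (Set.mem_insert_of_mem _ hx₀)
          (fun T hT => hsub hT.1)
          ?_ ?_
        · simp only [List.length_cons] at key; omega
        · intro e' he'
          rcases List.mem_cons.mp he' with rfl | h
          · exact ⟨Set.mem_insert_of_mem _ hp, hy0⟩
          · exact ⟨Set.mem_insert_of_mem _ (hC _ h).1, (hC _ h).2⟩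
        · intro T hT hcons' D Pm hD1 hD2 hD3
          obtain ⟨hT1, hT2, hT3⟩ := hT
          have hconsH : ConsistentH T H := fun q hq => hcons' q (Set.mem_insert_of_mem _ hq)
          obtain ⟨old1, old2, old3⟩ := hInv T hT1 hconsH D Pm hD1 hD2 hD3
          have hla : T.label e.1 = e.2.1 := hconsH (e.1, e.2.1) hp
          have hdiff : T.label x ≠ T.label e.1 := by
            rw [hT2, hla]; exact hne (e.1, e.2.1) hp
          obtain ⟨φ', hfb, hspec⟩ := hD3 x e.1 hdiff
          have hφ' : φ' = φmap (e.1, e.2.1) := Option.some.inj (hfb.symm.trans hT3)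
          subst hφ'
          have hcond : T.label e.1 ≠ 0 := by rw [hla]; exact hy0
          rw [if_pos hcond] at hspec
          obtain ⟨⟨hφΦ, hφx⟩, φ₀, hφ₀S, hφeq⟩ := hspec
          have hφ₀ : φ₀ = negF (φmap (e.1, e.2.1)) := by
            funext z
            have h1 := congrFun hφeq z
            simp only [negF] at h1 ⊢
            rw [h1, Bool.not_not]
          refine ⟨?_, ?_, ?_⟩
          · intro e' he'
            rcases List.mem_cons.mp he' with rfl | h
            · exact hφ₀ ▸ hφ₀S
            · exact old1 e' h
          · simp only [List.map_cons, List.nodup_cons]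
            refine ⟨?_, old2⟩
            intro hmem'
            obtain ⟨e', he', heq⟩ := List.mem_map.mp hmem'
            have hfeat : e'.2.2 = negF (φmap (e.1, e.2.1)) := congrArg Prod.snd heq
            have hPmeq : Pm e'.1 = Pm e.1 := congrArg Prod.fst heq
            by_cases hanch : e'.1 = e.1
            · have htrue := hall e' he' hanch
              rw [hfeat] at htrue
              simp [negF, hφx] at htrue
            · exact old3 e' he' e heC hanch hPmeq
          · intro e1 h1 e2 h2 hne12
            rcases List.mem_cons.mp h1 with rfl | h1' <;>
              rcases List.mem_cons.mp h2 with rfl | h2'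
            · exact absurd rfl hne12
            · exact old3 e heC e2 h2' hne12
            · exact old3 e1 h1' e heC hne12
            · exact old3 e1 h1' e2 h2' hne12
      · -- Case C: every anchor group has a feature false at x; query (x₀, 0).
        push_neg at hB
        have key := ih (TRestrict 𝒯 x x₀ (ymap (x₀, 0)) (φmap (x₀, 0)))
          (insert (x, ymap (x₀, 0)) H)
          ((x, ymap (x₀, 0), φmap (x₀, 0)) :: C)
          (hst (x₀, 0) hx₀)
          (Set.mem_insert_of_mem _ hx₀)
          (fun T hT => hsub hT.1)
          ?_ ?_
        · simp only [List.length_cons] at key; omega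
        · intro e' he'
          rcases List.mem_cons.mp he' with rfl | h
          · exact ⟨Set.mem_insert _ _, hne (x₀, 0) hx₀⟩
          · exact ⟨Set.mem_insert_of_mem _ (hC _ h).1, (hC _ h).2⟩
        · intro T hT hcons' D Pm hD1 hD2 hD3
          obtain ⟨hT1, hT2, hT3⟩ := hT
          have hconsH : ConsistentH T H := fun q hq => hcons' q (Set.mem_insert_of_mem _ hq)
          obtain ⟨old1, old2, old3⟩ := hInv T hT1 hconsH D Pm hD1 hD2 hD3
          have hl0 : T.label x₀ = 0 := hconsH (x₀, 0) hx₀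
          have hyne : ymap ((x₀, 0) : X × Fin (L + 1)) ≠ 0 := hne (x₀, 0) hx₀
          have hdiff : T.label x ≠ T.label x₀ := by rw [hT2, hl0]; exact hyne
          obtain ⟨φ', hfb, hspec⟩ := hD3 x x₀ hdiff
          have hφ' : φ' = φmap (x₀, 0) := Option.some.inj (hfb.symm.trans hT3)
          subst hφ'
          rw [if_neg (fun hcon => hcon hl0)] at hspec
          obtain ⟨hφS, -⟩ := hspec
          have hsat : SatAll (D.S (Pm x)) x := (hD2 x (by rw [hT2]; exact hyne)).1
          have hkey : ∀ e' ∈ C, Pm e'.1 ≠ Pm x := by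
            intro e' he' hPmeq
            obtain ⟨e'', he''C, hanch, hfalse⟩ := hB e' he'
            have hmem2 : e''.2.2 ∈ D.S (Pm x) := by
              have h0 := old1 e'' he''C
              rw [hanch, hPmeq] at h0
              exact h0
            exact hfalse (hsat _ hmem2)
          refine ⟨?_, ?_, ?_⟩
          · intro e' he'
            rcases List.mem_cons.mp he' with rfl | h
            · exact hφS
            · exact old1 e' h
          · simp only [List.map_cons, List.nodup_cons]
            refine ⟨?_, old2⟩
            intro hmem'
            obtain ⟨e', he', heq⟩ := List.mem_map.mp hmem'
            exact hkey e' he' (congrArg Prod.fst heq)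
          · intro e1 h1 e2 h2 hne12
            rcases List.mem_cons.mp h1 with rfl | h1' <;>
              rcases List.mem_cons.mp h2 with rfl | h2'
            · exact absurd rfl hne12
            · exact (hkey e2 h2').symm
            · exact hkey e1 h1'
            · exact old3 e1 h1' e2 h2' hne12

/-- **Theorem (upper bound for the relaxed component model).** Let
`L, R, M ∈ ℕ`, let `X` be any set of examples and `Φ` any set of Boolean
features on `X` closed under negation, and let `𝒯` be the relaxed component
model teacher class with parameters `(L, R, M)` over `(X, {0, …, L}, Φ)`.
If `H = {(x₀, 0)}` for some `x₀ ∈ X` such that `𝒯` is consistent with `H`,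
then `DFFdim(𝒯, H) ≤ R · M`. -/
theorem DFFdim_RCM_le {X : Type} (Φ : Set (X → Bool))
    (hneg : ∀ φ ∈ Φ, negF φ ∈ Φ) (L R M : ℕ) (x₀ : X)
    (hcons : ∃ T ∈ RCMClass X Φ L R M,
      ConsistentH T {((x₀ : X), (0 : Fin (L + 1)))}) :
    DFFdim Φ (RCMClass X Φ L R M) {((x₀ : X), (0 : Fin (L + 1)))} ≤
      ((R * M : ℕ) : ℕ∞) := by
  refine sSup_le ?_
  rintro d ⟨n, rfl, hsh⟩
  have h := RCM_key Φ L R M x₀ n _ _ [] hsh (Set.mem_singleton _)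
    (fun T hT => hT) (by simp)
    (by intro T hT hc D Pm _ _ _; exact ⟨by simp, by simp, by simp⟩)
  simp only [List.length_nil, Nat.add_zero] at h
  exact_mod_cast h
end

section
/- Let (X,Φ) be the natural feature construction, let the label set be Y = {0,1} (i.e., L = 1), and let H = {(0̄,0)}. Given R, M ∈ ℕ, let 𝒯 be the relaxed component model teacher class with parameters (L=1,R,M) over (X,Y,Φ). Then DFFdim(𝒯,H) = R·M. -/
open scoped Classical

/-- The natural feature construction: examples are infinite Boolean sequences
and the features are the coordinate projections and their negations. -/
def PhiNat : Set ((ℕ → Bool) → Bool) :=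
  {φ | ∃ n : ℕ, φ = fun x => x n} ∪ {φ | ∃ n : ℕ, φ = fun x => !(x n)}


/-! ### Auxiliary material for the proof -/

section Aux

local notation "X" => (ℕ → Bool)

abbrev zeroX : ℕ → Bool := fun _ => false

lemma fin2_eq_one_of_ne_zero : ∀ v : Fin 2, v ≠ 0 → v = 1 := by decide
lemma fin2_eq_zero_of_ne_one : ∀ v : Fin 2, v ≠ 1 → v = 0 := by decide
lemma fin2_one_ne_zero : (1 : Fin 2) ≠ 0 := by decide

lemma negF_negF {α : Type} (f : α → Bool) : negF (negF f) = f := by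
  funext z; simp [negF]

lemma negF_inj {α : Type} {f g : α → Bool} (h : negF f = negF g) : f = g := by
  have := congrArg negF h
  rwa [negF_negF, negF_negF] at this

/-- A shattered tree always yields a consistent teacher in the class. -/
lemma exists_consistent_of_shattered {Y : Type} {Φ : Set ((ℕ → Bool) → Bool)}
    : ∀ (d : ℕ) (𝒯 : Set (Teacher (ℕ → Bool) Y Φ)) (H : Set ((ℕ → Bool) × Y)),
    H.Nonempty → ShatteredDFFT Φ 𝒯 H d → ∃ T ∈ 𝒯, ConsistentH T H := by
  intro d
  induction d with
  | zero =>
    intro 𝒯 H _ hs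
    cases hs with
    | leaf _ _ h => exact h
  | succ d ih =>
    intro 𝒯 H hne hs
    cases hs with
    | node _ _ _ x y φ hy hΦ h =>
      obtain ⟨p, hp⟩ := hne
      obtain ⟨T, hT, hcons⟩ := ih _ _ ⟨(x, y p), Set.mem_insert _ _⟩ (h p hp)
      exact ⟨T, hT.1, fun q hq => hcons q (Set.mem_insert_of_mem _ hq)⟩

/-- A contradictory history admits no shattered tree. -/
lemma not_shattered_of_contradictory {Y : Type} {Φ : Set ((ℕ → Bool) → Bool)}
    : ∀ (d : ℕ) (𝒯 : Set (Teacher (ℕ → Bool) Y Φ)) (H : Set ((ℕ → Bool) × Y))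
    (x : ℕ → Bool) (b₁ b₂ : Y), b₁ ≠ b₂ → (x, b₁) ∈ H → (x, b₂) ∈ H →
    ¬ ShatteredDFFT Φ 𝒯 H d := by
  intro d
  induction d with
  | zero =>
    intro 𝒯 H x b₁ b₂ hb h1 h2 hs
    cases hs with
    | leaf _ _ h =>
      obtain ⟨T, _, hc⟩ := h
      exact hb ((hc _ h1).symm.trans (hc _ h2))
  | succ d ih =>
    intro 𝒯 H x b₁ b₂ hb h1 h2 hs
    cases hs with
    | node _ _ _ x' y φ hy hΦ h =>
      exact ih _ _ x b₁ b₂ hb (Set.mem_insert_of_mem _ h1)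
        (Set.mem_insert_of_mem _ h2) (h (x, b₁) h1)

/-- Shattering is monotone in the teacher class. -/
lemma shattered_mono_s5 {Y : Type} {Φ : Set ((ℕ → Bool) → Bool)}
    : ∀ (d : ℕ) (𝒯 𝒯' : Set (Teacher (ℕ → Bool) Y Φ)) (H : Set ((ℕ → Bool) × Y)),
    𝒯 ⊆ 𝒯' → ShatteredDFFT Φ 𝒯 H d → ShatteredDFFT Φ 𝒯' H d := by
  intro d
  induction d with
  | zero =>
    intro 𝒯 𝒯' H hsub hs
    cases hs with
    | leaf _ _ h =>
      obtain ⟨T, hT, hc⟩ := h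
      exact ShatteredDFFT.leaf _ _ ⟨T, hsub hT, hc⟩
  | succ d ih =>
    intro 𝒯 𝒯' H hsub hs
    cases hs with
    | node _ _ _ x y φ hy hΦ h =>
      refine ShatteredDFFT.node _ _ _ x y φ hy hΦ (fun p hp => ?_)
      refine ih _ _ _ ?_ (h p hp)
      intro T hT
      exact ⟨hsub hT.1, hT.2⟩

end Aux

/-! ### Upper bound -/

section Upper

/-- Main upper bound induction: along a suitably chosen path of a shattered
tree, every round increases the certified knowledge `∑ a ∈ A, (G a).card`
by one, and the total knowledge of any consistent teacher is at most `R·M`. -/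
lemma upper_aux (R M : ℕ) :
    ∀ (d : ℕ) (𝒯 : Set (Teacher (ℕ → Bool) (Fin 2) PhiNat))
      (H : Set ((ℕ → Bool) × Fin 2)) (A : Finset (ℕ → Bool))
      (G : (ℕ → Bool) → Finset ((ℕ → Bool) → Bool)),
    𝒯 ⊆ RCMClass (ℕ → Bool) PhiNat 1 R M →
    ((zeroX, (0 : Fin 2)) ∈ H) →
    (∀ u, (u, (1 : Fin 2)) ∈ H ↔ u ∈ A) →
    (∀ T ∈ 𝒯, ConsistentH T H → ∀ (D : RCMData (ℕ → Bool) PhiNat 1 R M)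
      (Pm : (ℕ → Bool) → Fin R),
      IsRCMLabel D T.label → IsPrimaryMap D T.label Pm →
      RCMFeedbackOK D T.label Pm T.feedback →
      (∀ a ∈ A, ∀ g ∈ G a, g ∈ D.S (Pm a)) ∧
      (∀ a ∈ A, ∀ b ∈ A, a ≠ b → Pm a ≠ Pm b)) →
    ShatteredDFFT PhiNat 𝒯 H d → d + (∑ a ∈ A, (G a).card) ≤ R * M := by
  intro d
  induction d with
  | zero =>
    intro 𝒯 H A G hsub h0 hA hinv hs
    cases hs with
    | leaf _ _ h =>
      obtain ⟨T, hT, hc⟩ := h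
      obtain ⟨D, Pm, hL, hP, hF⟩ := hsub hT
      obtain ⟨hmem, hinj⟩ := hinv T hT hc D Pm hL hP hF
      simp only [Nat.zero_add]
      calc ∑ a ∈ A, (G a).card ≤ ∑ a ∈ A, (D.S (Pm a)).card := by
            refine Finset.sum_le_sum (fun a ha => ?_)
            exact Finset.card_le_card (fun g hg => hmem a ha g hg)
        _ = ∑ j ∈ A.image Pm, (D.S j).card := by
            rw [Finset.sum_image]
            intro a ha b hb hab
            by_contra hne
            exact hinj a ha b hb hne hab
        _ ≤ ∑ j ∈ (Finset.univ : Finset (Fin R)), (D.S j).card := by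
            refine Finset.sum_le_sum_of_subset (Finset.subset_univ _)
        _ ≤ R * M := by
            have := Finset.sum_le_card_nsmul (Finset.univ : Finset (Fin R))
              (fun j => (D.S j).card) M (fun j _ => D.hSM j)
            simpa [Finset.card_univ, mul_comm] using this
  | succ d ih =>
    intro 𝒯 H A G hsub h0 hA hinv hs
    cases hs with
    | node _ _ _ x y φ hy hΦ h =>
      by_cases hx : ∃ b, (x, b) ∈ H
      · -- repeated example: the node is impossible
        obtain ⟨b, hb⟩ := hx
        exact absurd (h (x, b) hb)
          (not_shattered_of_contradictory d _ _ x (y (x, b)) b (hy (x, b) hb)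
            (Set.mem_insert _ _) (Set.mem_insert_of_mem _ hb))
      · push_neg at hx
        by_cases hself : ∃ a ∈ A, negF (φ (a, 1)) ∉ G a
        · -- a non-self response on some anchor: grow its feature set
          obtain ⟨a, haA, hγ⟩ := hself
          have haH : (a, (1 : Fin 2)) ∈ H := (hA a).2 haA
          have hy0 : y (a, 1) = 0 := fin2_eq_zero_of_ne_one _ (hy (a, 1) haH)
          set γ : (ℕ → Bool) → Bool := negF (φ (a, 1)) with hγdef
          set G' := Function.update G a (insert γ (G a)) with hG'
          have hbr := h (a, 1) haH
          rw [hy0] at hbr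
          have key := ih (TRestrict 𝒯 x a 0 (φ (a, 1))) (insert (x, 0) H) A G'
            (fun T hT => hsub hT.1)
            (Set.mem_insert_of_mem _ h0)
            (by
              intro u
              constructor
              · rintro (hu | hu)
                · exact ((by decide : (1 : Fin 2) ≠ 0) (congrArg Prod.snd hu)).elim
                · exact (hA u).1 hu
              · intro hu
                exact Set.mem_insert_of_mem _ ((hA u).2 hu))
            (by
              intro T hT hc D Pm hL hP hF
              have hcH : ConsistentH T H := fun q hq => hc q (Set.mem_insert_of_mem _ hq)
              obtain ⟨hmem, hinj⟩ := hinv T hT.1 hcH D Pm hL hP hF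
              refine ⟨?_, hinj⟩
              intro b hb g hg
              by_cases hba : b = a
              · subst hba
                rw [hG', Function.update_self] at hg
                rcases Finset.mem_insert.1 hg with hg | hg
                · subst hg
                  -- derive γ ∈ D.S (Pm b) from the feedback rule
                  have hlx : T.label x = 0 := hT.2.1
                  have hlb : T.label b = 1 := hc (b, 1) (Set.mem_insert_of_mem _ haH)
                  have hne' : T.label x ≠ T.label b := by rw [hlx, hlb]; decide
                  obtain ⟨φ', hfeq, hprops⟩ := hF x b hne'
                  rw [hT.2.2] at hfeq
                  have hφ' : φ (b, 1) = φ' := Option.some.inj hfeq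
                  rw [if_pos (by rw [hlb]; decide)] at hprops
                  obtain ⟨φ₀, hφ₀S, hφ₀⟩ := hprops.2
                  rw [← hφ'] at hφ₀
                  have hgp : γ = φ₀ := by rw [hγdef, hφ₀, negF_negF]
                  rw [hgp]
                  exact hφ₀S
                · exact hmem b hb g hg
              · rw [hG', Function.update_of_ne hba] at hg
                exact hmem b hb g hg)
            hbr
          have hsum : ∑ b ∈ A, (G' b).card = (∑ b ∈ A, (G b).card) + 1 := by
            have hcard : ∀ b ∈ A, (G' b).card
                = (G b).card + (if b = a then 1 else 0) := by
              intro b hb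
              by_cases hba : b = a
              · subst hba
                rw [hG', Function.update_self,
                  Finset.card_insert_of_notMem hγ, if_pos rfl]
              · rw [hG', Function.update_of_ne hba, if_neg hba, add_zero]
            rw [Finset.sum_congr rfl hcard, Finset.sum_add_distrib,
              Finset.sum_ite_eq' A a (fun _ => 1), if_pos haA]
          omega
        · -- all responses are self: open a new anchor via the root pair
          push_neg at hself
          have hy1 : y (zeroX, 0) = 1 := fin2_eq_one_of_ne_zero _ (hy _ h0)
          set β := φ (zeroX, 0) with hβ
          have hbr := h (zeroX, 0) h0
          rw [hy1] at hbr
          have hxA : x ∉ A := fun hc => hx 1 ((hA x).2 hc)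
          set G' := Function.update G x {β} with hG'
          have key := ih (TRestrict 𝒯 x zeroX 1 β) (insert (x, 1) H) (insert x A) G'
            (fun T hT => hsub hT.1)
            (Set.mem_insert_of_mem _ h0)
            (by
              intro u
              constructor
              · rintro (hu | hu)
                · exact Finset.mem_insert.2 (Or.inl (Prod.ext_iff.1 hu).1)
                · exact Finset.mem_insert.2 (Or.inr ((hA u).1 hu))
              · intro hu
                rcases Finset.mem_insert.1 hu with hu | hu
                · subst hu; exact Set.mem_insert _ _
                · exact Set.mem_insert_of_mem _ ((hA u).2 hu))
            (by
              intro T hT hc D Pm hL hP hF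
              have hcH : ConsistentH T H := fun q hq => hc q (Set.mem_insert_of_mem _ hq)
              obtain ⟨hmem, hinj⟩ := hinv T hT.1 hcH D Pm hL hP hF
              have hlx : T.label x = 1 := hT.2.1
              have hβS : β ∈ D.S (Pm x) := by
                have hl0 : T.label zeroX = 0 := hcH (zeroX, 0) h0
                have hne' : T.label x ≠ T.label zeroX := by rw [hlx, hl0]; decide
                obtain ⟨φ', hfeq, hprops⟩ := hF x zeroX hne'
                rw [hT.2.2] at hfeq
                have hφ' : φ' = β := (Option.some.inj hfeq).symm
                rw [if_neg (by rw [hl0]; simp)] at hprops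
                rw [← hφ']
                exact hprops.1
              -- the key injectivity step
              have hPmx : ∀ a ∈ A, Pm x ≠ Pm a := by
                intro a haA heq
                -- extract a teacher from the (a,1) branch to read off γ_a x = false
                have haH : (a, (1 : Fin 2)) ∈ H := (hA a).2 haA
                have hy0 : y (a, 1) = 0 := fin2_eq_zero_of_ne_one _ (hy (a, 1) haH)
                have hbra := h (a, 1) haH
                rw [hy0] at hbra
                obtain ⟨T₂, hT₂, hc₂⟩ := exists_consistent_of_shattered d _ _
                  ⟨(x, 0), Set.mem_insert _ _⟩ hbra
                obtain ⟨D₂, Pm₂, hL₂, hP₂, hF₂⟩ := hsub hT₂.1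
                have hlx₂ : T₂.label x = 0 := hT₂.2.1
                have hla₂ : T₂.label a = 1 := hc₂ (a, 1) (Set.mem_insert_of_mem _ haH)
                have hne₂ : T₂.label x ≠ T₂.label a := by rw [hlx₂, hla₂]; decide
                obtain ⟨φ', hfeq, hprops⟩ := hF₂ x a hne₂
                rw [hT₂.2.2] at hfeq
                have hφ' : φ' = φ (a, 1) := (Option.some.inj hfeq).symm
                rw [if_pos (by rw [hla₂]; decide)] at hprops
                have hφx : φ (a, 1) x = true := by rw [← hφ']; exact hprops.1.2
                have hγx : negF (φ (a, 1)) x = false := by simp [negF, hφx]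
                -- but the main branch teacher forces γ_a x = true
                have hγa : negF (φ (a, 1)) ∈ D.S (Pm a) :=
                  hmem a haA _ (hself a haA)
                have hsat : SatAll (D.S (Pm x)) x := (hP x (by rw [hlx]; decide)).1
                have : negF (φ (a, 1)) x = true := by
                  apply hsat
                  rw [heq]; exact hγa
                rw [hγx] at this
                exact absurd this (by decide)
              refine ⟨?_, ?_⟩
              · intro b hb g hg
                rcases Finset.mem_insert.1 hb with hb | hb
                · subst hb
                  rw [hG', Function.update_self] at hg
                  rw [Finset.mem_singleton.1 hg]
                  exact hβS
                · rw [hG', Function.update_of_ne (fun hbx => hxA (by rwa [hbx] at hb))] at hg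
                  exact hmem b hb g hg
              · intro b hb c hc' hbc
                rcases Finset.mem_insert.1 hb with hbx | hbA
                · rcases Finset.mem_insert.1 hc' with hcx | hcA
                  · exact absurd (hbx.trans hcx.symm) hbc
                  · rw [hbx]; exact hPmx c hcA
                · rcases Finset.mem_insert.1 hc' with hcx | hcA
                  · rw [hcx]; exact fun hq => hPmx b hbA hq.symm
                  · exact hinj b hbA c hcA hbc)
            hbr
          have hsum : ∑ b ∈ insert x A, (G' b).card = (∑ b ∈ A, (G b).card) + 1 := by
            rw [Finset.sum_insert hxA, hG', Function.update_self]
            have : ∀ b ∈ A, (Function.update G x {β} b).card = (G b).card := by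
              intro b hb
              rw [Function.update_of_ne (fun hbx => hxA (by rwa [hbx] at hb))]
            rw [Finset.sum_congr rfl this]
            simp [add_comm]
          omega

end Upper

/-! ### Lower bound: infrastructure -/

section Lower

/-- Coordinate feature. -/
def posF (n : ℕ) : (ℕ → Bool) → Bool := fun x => x n

lemma posF_mem_PhiNat (n : ℕ) : posF n ∈ PhiNat := Or.inl ⟨n, rfl⟩

lemma negF_posF_mem_PhiNat (n : ℕ) : negF (posF n) ∈ PhiNat := Or.inr ⟨n, rfl⟩

/-- Coordinate encoding: region, block slot, index. -/
def enc (r j i : ℕ) : ℕ := Nat.pair r (Nat.pair j i)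

def slotOf (ν : ℕ) : ℕ := (Nat.unpair (Nat.unpair ν).2).1
def idxOf (ν : ℕ) : ℕ := (Nat.unpair (Nat.unpair ν).2).2

@[simp] lemma slotOf_enc (r j i : ℕ) : slotOf (enc r j i) = j := by
  simp [slotOf, enc]
@[simp] lemma idxOf_enc (r j i : ℕ) : idxOf (enc r j i) = i := by
  simp [idxOf, enc]

/-- The anchor/0-point examples: block `c`, region `rr`. -/
def Ex (c rr : ℕ) : ℕ → Bool := fun ν => decide (slotOf ν = c ∧ idxOf ν ≠ 2 * rr)

lemma Ex_iff {c rr ν : ℕ} : Ex c rr ν = true ↔ slotOf ν = c ∧ idxOf ν ≠ 2 * rr := by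
  simp [Ex]

lemma Ex_false_iff {c rr ν : ℕ} : Ex c rr ν = false ↔ (slotOf ν ≠ c ∨ idxOf ν = 2 * rr) := by
  simp [Ex, Decidable.imp_iff_not_or]

lemma Ex_ne_zeroX (c rr : ℕ) : Ex c rr ≠ zeroX := by
  intro h
  have h1 : Ex c rr (enc 0 c (2 * rr + 1)) = true := by
    rw [Ex_iff]
    refine ⟨slotOf_enc _ _ _, ?_⟩
    rw [idxOf_enc]
    omega
  rw [h] at h1
  exact absurd h1 (by simp [zeroX])

lemma Ex_inj {c rr c' rr' : ℕ} (h : Ex c rr = Ex c' rr') : c = c' ∧ rr = rr' := by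
  have hc : c = c' := by
    by_contra hne
    have h1 : Ex c rr (enc 0 c (2 * rr + 1)) = true := by
      rw [Ex_iff]
      simp only [slotOf_enc, idxOf_enc]
      exact ⟨by simp, by omega⟩
    rw [h, Ex_iff] at h1
    simp only [slotOf_enc, idxOf_enc] at h1
    exact hne h1.1
  subst hc
  refine ⟨rfl, ?_⟩
  by_contra hne
  have h1 : Ex c rr (enc 0 c (2 * rr')) = true := by
    rw [Ex_iff]
    simp only [slotOf_enc, idxOf_enc]
    exact ⟨by simp, by omega⟩
  rw [h, Ex_iff] at h1
  simp only [slotOf_enc, idxOf_enc] at h1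
  omega

/-- State of the lower-bound construction along a path. -/
structure LBSt where
  r : ℕ
  Rev : ℕ → Finset ℕ
  AL : Set (ℕ × ℕ)
  ZL : Set (ℕ × ℕ × ℕ)
  C1 : Set ((ℕ × ℕ) × Option (ℕ × ℕ) × ℕ)
  C2 : Set ((ℕ × ℕ) × (ℕ × ℕ) × ℕ)

def vEx : Option (ℕ × ℕ) → (ℕ → Bool)
  | none => zeroX
  | some p => Ex p.1 p.2

def HSet (σ : LBSt) : Set ((ℕ → Bool) × Fin 2) :=
  {p | p = (zeroX, 0) ∨ (∃ a ∈ σ.AL, p = (Ex a.1 a.2, 1)) ∨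
    (∃ z ∈ σ.ZL, p = (Ex z.1 z.2.1, 0))}

def ExtOK (R M : ℕ) (σ : LBSt) (B : ℕ → Finset ℕ) : Prop :=
  ∀ j, j < R → σ.Rev j ⊆ B j ∧ (B j).Nonempty ∧ (B j).card ≤ M ∧
    ∀ ν ∈ B j, slotOf ν = j ∧ ∀ a ∈ σ.AL, a.1 = j → idxOf ν ≠ 2 * a.2

def lab (R : ℕ) (B : ℕ → Finset ℕ) : (ℕ → Bool) → Fin 2 :=
  fun u => if ∃ j, j < R ∧ ∀ ν ∈ B j, u ν = true then 1 else 0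

def Compat (R M : ℕ) (σ : LBSt) (T : Teacher (ℕ → Bool) (Fin 2) PhiNat) : Prop :=
  (∃ B, ExtOK R M σ B ∧ T.label = lab R B) ∧
  (∀ e ∈ σ.C1, T.feedback (Ex e.1.1 e.1.2) (vEx e.2.1) = some (posF e.2.2)) ∧
  (∀ e ∈ σ.C2, T.feedback (Ex e.1.1 e.1.2) (Ex e.2.1.1 e.2.1.2) =
    some (negF (posF e.2.2)))

def KK (R M : ℕ) (σ : LBSt) : Set (Teacher (ℕ → Bool) (Fin 2) PhiNat) :=
  {T | T ∈ RCMClass (ℕ → Bool) PhiNat 1 R M ∧ Compat R M σ T}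

/-- Invariants of the lower-bound state. -/
structure INV (R M : ℕ) (σ : LBSt) : Prop where
  hA : ∀ a ∈ σ.AL, a.1 < R ∧ a.2 < σ.r
  hZ : ∀ z ∈ σ.ZL, z.1 < R ∧ z.2.1 < σ.r
  hAA : ∀ a ∈ σ.AL, ∀ a' ∈ σ.AL, a.2 = a'.2 → a = a'
  hZZ : ∀ z ∈ σ.ZL, ∀ z' ∈ σ.ZL, z.2.1 = z'.2.1 → z = z'
  hAZ : ∀ a ∈ σ.AL, ∀ z ∈ σ.ZL, a.2 ≠ z.2.1
  hRevSlot : ∀ j, ∀ ν ∈ σ.Rev j, slotOf ν = j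
  hRevIdx : ∀ j, ∀ ν ∈ σ.Rev j, ∀ rr, σ.r ≤ rr → idxOf ν ≠ 2 * rr
  hRevA : ∀ j, ∀ ν ∈ σ.Rev j, ∀ a ∈ σ.AL, a.1 = j → idxOf ν ≠ 2 * a.2
  hRevCard : ∀ j, (σ.Rev j).card ≤ M
  hAnb : ∀ a ∈ σ.AL, (σ.Rev a.1).Nonempty
  hWz : ∀ z ∈ σ.ZL, z.2.2 ∈ σ.Rev z.1 ∧ Ex z.1 z.2.1 z.2.2 = false
  hC1 : ∀ e ∈ σ.C1, e.1 ∈ σ.AL ∧ e.2.2 ∈ σ.Rev e.1.1 ∧ vEx e.2.1 e.2.2 = false ∧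
    (e.2.1 = none ∨ ∃ z ∈ σ.ZL, e.2.1 = some (z.1, z.2.1))
  hC2 : ∀ e ∈ σ.C2, (∃ w, (e.1.1, e.1.2, w) ∈ σ.ZL) ∧ e.2.1 ∈ σ.AL ∧
    e.2.2 ∈ σ.Rev e.2.1.1 ∧ Ex e.1.1 e.1.2 e.2.2 = false
  hC1key : ∀ e ∈ σ.C1, ∀ e' ∈ σ.C1, e.1.2 = e'.1.2 → e = e'
  hC2key : ∀ e ∈ σ.C2, ∀ e' ∈ σ.C2, e.1.2 = e'.1.2 → e = e'

end Lower

/-! ### Lower bound: the leaf teacher -/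

section LowerLeaf

variable {R M : ℕ} {σ : LBSt}

def blkSat (B : ℕ → Finset ℕ) (j : ℕ) (u : ℕ → Bool) : Prop :=
  ∀ ν ∈ B j, u ν = true

lemma satAll_image_iff {B : ℕ → Finset ℕ} {j : ℕ} {u : ℕ → Bool} :
    SatAll ((B j).image posF) u ↔ blkSat B j u := by
  constructor
  · intro h ν hν
    exact h (posF ν) (Finset.mem_image.2 ⟨ν, hν, rfl⟩)
  · intro h f hf
    obtain ⟨ν, hν, rfl⟩ := Finset.mem_image.1 hf
    exact h ν hν

noncomputable def Bv (σ : LBSt) : ℕ → Finset ℕ :=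
  fun j => if (σ.Rev j).Nonempty then σ.Rev j else {enc σ.r j 1}

lemma Bv_extOK (hInv : INV R M σ) (hM : 0 < M) : ExtOK R M σ (Bv σ) := by
  intro j _
  by_cases hne : (σ.Rev j).Nonempty
  · rw [Bv, if_pos hne]
    exact ⟨Finset.Subset.refl _, hne, hInv.hRevCard j,
      fun ν hν => ⟨hInv.hRevSlot j ν hν, fun a ha haj => hInv.hRevA j ν hν a ha haj⟩⟩
  · rw [Bv, if_neg hne]
    have hRe : σ.Rev j = ∅ := Finset.not_nonempty_iff_eq_empty.1 hne
    refine ⟨by rw [hRe]; exact Finset.empty_subset _, ⟨_, Finset.mem_singleton_self _⟩,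
      by simp only [Finset.card_singleton]; omega, ?_⟩
    intro ν hν
    rw [Finset.mem_singleton.1 hν]
    exact ⟨slotOf_enc _ _ _, fun a _ _ => by rw [idxOf_enc]; omega⟩

section WithB

variable {B : ℕ → Finset ℕ}

lemma B_true_at_anchor (hInv : INV R M σ) (hB : ExtOK R M σ B)
    {a : ℕ × ℕ} (ha : a ∈ σ.AL) {ν : ℕ} (hν : ν ∈ B a.1) :
    Ex a.1 a.2 ν = true := by
  obtain ⟨hslot, hexcl⟩ := (hB a.1 (hInv.hA a ha).1).2.2.2 ν hν
  exact Ex_iff.2 ⟨hslot, hexcl a ha rfl⟩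

lemma anchor_blkSat (hInv : INV R M σ) (hB : ExtOK R M σ B)
    {a : ℕ × ℕ} (ha : a ∈ σ.AL) : blkSat B a.1 (Ex a.1 a.2) :=
  fun ν hν => B_true_at_anchor hInv hB ha hν

lemma slot_not_sat (hB : ExtOK R M σ B) {j c rr : ℕ} (hj : j < R) (hjc : j ≠ c) :
    ¬ blkSat B j (Ex c rr) := by
  intro hs
  obtain ⟨ν, hν⟩ := (hB j hj).2.1
  have h1 := hs ν hν
  have h2 := ((hB j hj).2.2.2 ν hν).1
  rw [Ex_iff] at h1
  exact hjc (h2 ▸ h1.1)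

lemma zero_not_sat (hB : ExtOK R M σ B) {j : ℕ} (hj : j < R) :
    ¬ blkSat B j zeroX := by
  intro hs
  obtain ⟨ν, hν⟩ := (hB j hj).2.1
  exact absurd (hs ν hν) (by simp [zeroX])

lemma z_not_sat (hInv : INV R M σ) (hB : ExtOK R M σ B)
    {z : ℕ × ℕ × ℕ} (hz : z ∈ σ.ZL) : ¬ blkSat B z.1 (Ex z.1 z.2.1) := by
  intro hs
  obtain ⟨hw, hwf⟩ := hInv.hWz z hz
  have := hs z.2.2 ((hB z.1 (hInv.hZ z hz).1).1 hw)
  rw [hwf] at this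
  exact absurd this (by decide)

lemma lab_eq_one_iff {u : ℕ → Bool} :
    lab R B u = 1 ↔ ∃ j, j < R ∧ blkSat B j u := by
  rw [lab]
  by_cases h : ∃ j, j < R ∧ ∀ ν ∈ B j, u ν = true
  · rw [if_pos h]; exact ⟨fun _ => h, fun _ => rfl⟩
  · rw [if_neg h]
    exact ⟨fun hc => absurd hc (by decide), fun hc => absurd hc h⟩

lemma lab_eq_zero_iff {u : ℕ → Bool} :
    lab R B u = 0 ↔ ¬ ∃ j, j < R ∧ blkSat B j u := by
  rw [lab]
  by_cases h : ∃ j, j < R ∧ ∀ ν ∈ B j, u ν = true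
  · rw [if_pos h]
    exact ⟨fun hc => absurd hc (by decide), fun hc => absurd h hc⟩
  · rw [if_neg h]; exact ⟨fun _ => h, fun _ => rfl⟩

lemma lab_anchor (hInv : INV R M σ) (hB : ExtOK R M σ B)
    {a : ℕ × ℕ} (ha : a ∈ σ.AL) : lab R B (Ex a.1 a.2) = 1 :=
  lab_eq_one_iff.2 ⟨a.1, (hInv.hA a ha).1, anchor_blkSat hInv hB ha⟩

lemma lab_zpt (hInv : INV R M σ) (hB : ExtOK R M σ B)
    {z : ℕ × ℕ × ℕ} (hz : z ∈ σ.ZL) : lab R B (Ex z.1 z.2.1) = 0 := by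
  rw [lab_eq_zero_iff]
  rintro ⟨j, hj, hs⟩
  by_cases hjz : j = z.1
  · exact z_not_sat hInv hB hz (hjz ▸ hs)
  · exact slot_not_sat hB hj hjz hs

lemma lab_zeroX (hB : ExtOK R M σ B) : lab R B zeroX = 0 := by
  rw [lab_eq_zero_iff]
  rintro ⟨j, hj, hs⟩
  exact zero_not_sat hB hj hs

noncomputable def PmV (hR : 0 < R) (B : ℕ → Finset ℕ) : (ℕ → Bool) → Fin R :=
  fun u => if h : ∃ j, j < R ∧ ∀ ν ∈ B j, u ν = true
    then ⟨h.choose, h.choose_spec.1⟩ else ⟨0, hR⟩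

lemma PmV_sat {hR : 0 < R} {u : ℕ → Bool} (h : ∃ j, j < R ∧ blkSat B j u) :
    blkSat B (PmV hR B u).val u := by
  have h' : ∃ j, j < R ∧ ∀ ν ∈ B j, u ν = true := h
  rw [PmV, dif_pos h']
  exact h'.choose_spec.2

lemma PmV_anchor (hInv : INV R M σ) (hB : ExtOK R M σ B) {hR : 0 < R}
    {a : ℕ × ℕ} (ha : a ∈ σ.AL) : (PmV hR B (Ex a.1 a.2)).val = a.1 := by
  have hex : ∃ j, j < R ∧ blkSat B j (Ex a.1 a.2) :=
    ⟨a.1, (hInv.hA a ha).1, anchor_blkSat hInv hB ha⟩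
  have hex' : ∃ j, j < R ∧ ∀ ν ∈ B j, Ex a.1 a.2 ν = true := hex
  rw [PmV, dif_pos hex']
  by_contra hne
  exact slot_not_sat hB hex'.choose_spec.1 hne hex'.choose_spec.2

end WithB

/-- The committed feedback values. -/
def CommP (σ : LBSt) (u v : ℕ → Bool) (f : (ℕ → Bool) → Bool) : Prop :=
  (∃ e ∈ σ.C1, u = Ex e.1.1 e.1.2 ∧ v = vEx e.2.1 ∧ f = posF e.2.2) ∨
  (∃ e ∈ σ.C2, u = Ex e.1.1 e.1.2 ∧ v = Ex e.2.1.1 e.2.1.2 ∧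
    f = negF (posF e.2.2))

lemma CommP_unique (hInv : INV R M σ) {u v : ℕ → Bool}
    {f f' : (ℕ → Bool) → Bool} (h : CommP σ u v f) (h' : CommP σ u v f') :
    f = f' := by
  rcases h with ⟨e, he, hu, hv, hf⟩ | ⟨e, he, hu, hv, hf⟩ <;>
    rcases h' with ⟨e', he', hu', hv', hf'⟩ | ⟨e', he', hu', hv', hf'⟩
  · have hreg : e.1.2 = e'.1.2 := (Ex_inj (hu.symm.trans hu')).2
    rw [hf, hf', hInv.hC1key e he e' he' hreg]
  · obtain ⟨w, hw⟩ := (hInv.hC2 e' he').1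
    have hreg := (Ex_inj (hu.symm.trans hu')).2
    exact absurd hreg (hInv.hAZ e.1 (hInv.hC1 e he).1 _ hw)
  · obtain ⟨w, hw⟩ := (hInv.hC2 e he).1
    have hreg := (Ex_inj (hu.symm.trans hu')).2
    exact absurd hreg.symm (hInv.hAZ e'.1 (hInv.hC1 e' he').1 _ hw)
  · have hreg : e.1.2 = e'.1.2 := (Ex_inj (hu.symm.trans hu')).2
    rw [hf, hf', hInv.hC2key e he e' he' hreg]

noncomputable def pickMu (B : ℕ → Finset ℕ) (j : ℕ) (v : ℕ → Bool) : ℕ :=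
  if h : ∃ μ ∈ B j, v μ = false then h.choose else 0

lemma pickMu_spec {B : ℕ → Finset ℕ} {j : ℕ} {v : ℕ → Bool}
    (h : ∃ μ ∈ B j, v μ = false) :
    pickMu B j v ∈ B j ∧ v (pickMu B j v) = false := by
  rw [pickMu, dif_pos h]
  exact ⟨h.choose_spec.1, h.choose_spec.2⟩

lemma exists_falsifier {B : ℕ → Finset ℕ} {j : ℕ} {v : ℕ → Bool}
    (hj : j < R) (hv : lab R B v = 0) : ∃ μ ∈ B j, v μ = false := by
  rw [lab_eq_zero_iff] at hv
  push_neg at hv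
  obtain ⟨μ, hμ, hval⟩ := by
    have := hv j hj
    rw [blkSat] at this
    push_neg at this
    exact this
  exact ⟨μ, hμ, by simpa using hval⟩

noncomputable def dflF (hR : 0 < R) (B : ℕ → Finset ℕ)
    (u v : ℕ → Bool) : Option ((ℕ → Bool) → Bool) :=
  if lab R B u = 1 ∧ lab R B v = 0 then
    some (posF (pickMu B (PmV hR B u).val v))
  else if lab R B u = 0 ∧ lab R B v = 1 then
    some (negF (posF (pickMu B (PmV hR B v).val u)))
  else none

noncomputable def fbF (σ : LBSt) (hR : 0 < R) (B : ℕ → Finset ℕ) :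
    (ℕ → Bool) → (ℕ → Bool) → Option ((ℕ → Bool) → Bool) :=
  fun u v => if h : ∃ f, CommP σ u v f then some h.choose else dflF hR B u v

lemma fbF_comm (hInv : INV R M σ) {hR : 0 < R} {B : ℕ → Finset ℕ}
    {u v : ℕ → Bool} {f : (ℕ → Bool) → Bool} (hc : CommP σ u v f) :
    fbF σ hR B u v = some f := by
  rw [fbF, dif_pos ⟨f, hc⟩]
  exact congrArg some (CommP_unique hInv (Exists.choose_spec ⟨f, hc⟩) hc)

lemma fin2_ne_cases : ∀ aa bb : Fin 2, aa ≠ bb →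
    (aa = 1 ∧ bb = 0) ∨ (aa = 0 ∧ bb = 1) := by decide

end LowerLeaf

/-! ### Lower bound: existence of a compatible consistent teacher -/

noncomputable def Dv (R M : ℕ) (σ : LBSt) (hInv : INV R M σ) (hM : 0 < M) :
    RCMData (ℕ → Bool) PhiNat 1 R M where
  S := fun j => ((Bv σ) j.val).image posF
  q := fun _ => 1
  hSΦ := by
    intro j f hf
    obtain ⟨ν, _, rfl⟩ := Finset.mem_image.1 hf
    exact posF_mem_PhiNat _
  hSM := fun j => le_trans Finset.card_image_le
    ((Bv_extOK hInv hM j.val j.isLt).2.2.1)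
  hq := fun _ => (by decide : (1 : Fin 2) ≠ 0)

section LeafTeacher

variable {R M : ℕ} {σ : LBSt}

lemma leaf_teacher (hR : 0 < R) (hM : 0 < M) (hInv : INV R M σ) :
    ∃ T ∈ KK R M σ, ConsistentH T (HSet σ) := by
  classical
  have hB : ExtOK R M σ (Bv σ) := Bv_extOK hInv hM
  set B := Bv σ with hBdef
  -- basic facts about committed pairs
  have hC1facts : ∀ e ∈ σ.C1,
      lab R B (Ex e.1.1 e.1.2) = 1 ∧ lab R B (vEx e.2.1) = 0 ∧
      Ex e.1.1 e.1.2 e.2.2 = true ∧ vEx e.2.1 e.2.2 = false ∧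
      e.2.2 ∈ B e.1.1 := by
    intro e he
    obtain ⟨heA, heRev, hevf, hor⟩ := hInv.hC1 e he
    refine ⟨lab_anchor hInv hB heA, ?_, ?_, hevf, (hB e.1.1 (hInv.hA _ heA).1).1 heRev⟩
    · rcases hor with hor | ⟨z, hz, hor⟩
      · rw [hor]; exact lab_zeroX hB
      · rw [hor]; exact lab_zpt hInv hB hz
    · exact Ex_iff.2 ⟨hInv.hRevSlot _ _ heRev, hInv.hRevA _ _ heRev e.1 heA rfl⟩
  have hC2facts : ∀ e ∈ σ.C2,
      lab R B (Ex e.1.1 e.1.2) = 0 ∧ lab R B (Ex e.2.1.1 e.2.1.2) = 1 ∧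
      Ex e.1.1 e.1.2 e.2.2 = false ∧ Ex e.2.1.1 e.2.1.2 e.2.2 = true ∧
      e.2.2 ∈ B e.2.1.1 := by
    intro e he
    obtain ⟨⟨w, hwZ⟩, heA, heRev, heuf⟩ := hInv.hC2 e he
    have hmemB : e.2.2 ∈ B e.2.1.1 := (hB e.2.1.1 (hInv.hA _ heA).1).1 heRev
    refine ⟨lab_zpt hInv hB (z := (e.1.1, e.1.2, w)) hwZ,
      lab_anchor hInv hB heA, heuf, ?_, hmemB⟩
    exact B_true_at_anchor hInv hB heA hmemB
  have hspec : ∀ u v : ℕ → Bool, lab R B u ≠ lab R B v →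
      ∃ φ ∈ PhiNat, fbF σ hR B u v = some φ ∧ φ u = true ∧ φ v = false := by
    intro u v hne
    by_cases hcp : ∃ f, CommP σ u v f
    · obtain ⟨f, hf⟩ := hcp
      have hfb := fbF_comm (hR := hR) (B := B) hInv hf
      rcases hf with ⟨e, he, hu, hv, hf⟩ | ⟨e, he, hu, hv, hf⟩
      · obtain ⟨_, _, hut, hvf, _⟩ := hC1facts e he
        refine ⟨f, ?_, hfb, ?_, ?_⟩
        · rw [hf]; exact posF_mem_PhiNat _
        · rw [hu, hf]; exact hut
        · rw [hv, hf]; exact hvf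
      · obtain ⟨_, _, huf, hvt, _⟩ := hC2facts e he
        refine ⟨f, ?_, hfb, ?_, ?_⟩
        · rw [hf]; exact negF_posF_mem_PhiNat _
        · rw [hu, hf]; simp [negF, posF, huf]
        · rw [hv, hf]; simp [negF, posF, hvt]
    · rcases fin2_ne_cases _ _ hne with ⟨h1, h0⟩ | ⟨h0, h1⟩
      · have hex := exists_falsifier (PmV hR B u).isLt h0
        obtain ⟨hmem, hval⟩ := pickMu_spec hex
        refine ⟨posF (pickMu B (PmV hR B u).val v), posF_mem_PhiNat _, ?_, ?_, hval⟩
        · rw [fbF, dif_neg hcp, dflF, if_pos ⟨h1, h0⟩]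
        · exact PmV_sat (lab_eq_one_iff.1 h1) _ hmem
      · have hex := exists_falsifier (PmV hR B v).isLt h0
        obtain ⟨hmem, hval⟩ := pickMu_spec hex
        refine ⟨negF (posF (pickMu B (PmV hR B v).val u)),
          negF_posF_mem_PhiNat _, ?_, ?_, ?_⟩
        · rw [fbF, dif_neg hcp, dflF,
            if_neg (fun hc => by rw [h0] at hc; exact absurd hc.1 (by decide)),
            if_pos ⟨h0, h1⟩]
        · simp [negF, posF, hval]
        · have := PmV_sat (lab_eq_one_iff.1 h1) _ hmem
          simp [negF, posF, this]
  refine ⟨⟨lab R B, fbF σ hR B, ?_⟩,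
    ⟨⟨Dv R M σ hInv hM, PmV hR B, ?_, ?_, ?_⟩, ⟨B, hB, rfl⟩, ?_, ?_⟩, ?_⟩
  · -- feedback_spec
    intro u v hne
    exact hspec u v hne
  · -- IsRCMLabel
    show IsRCMLabel (Dv R M σ hInv hM) (lab R B)
    intro u
    constructor
    · intro j hs
      exact lab_eq_one_iff.2 ⟨j.val, j.isLt, satAll_image_iff.1 hs⟩
    · intro hns
      rw [lab_eq_zero_iff]
      rintro ⟨j, hj, hs⟩
      exact hns ⟨j, hj⟩ (satAll_image_iff.2 hs)
  · -- IsPrimaryMap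
    show IsPrimaryMap (Dv R M σ hInv hM) (lab R B) (PmV hR B)
    intro u hu
    have h1 : lab R B u = 1 := fin2_eq_one_of_ne_zero _ hu
    exact ⟨satAll_image_iff.2 (PmV_sat (lab_eq_one_iff.1 h1)), h1.symm⟩
  · -- RCMFeedbackOK
    show RCMFeedbackOK (Dv R M σ hInv hM) (lab R B) (PmV hR B) (fbF σ hR B)
    intro u v hne
    by_cases hcp : ∃ f, CommP σ u v f
    · obtain ⟨f, hf⟩ := hcp
      have hfb := fbF_comm (hR := hR) (B := B) hInv hf
      rcases hf with ⟨e, he, hu, hv, hf⟩ | ⟨e, he, hu, hv, hf⟩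
      · obtain ⟨hl1, hl0, hut, hvf, hmemB⟩ := hC1facts e he
        subst hu hv hf
        refine ⟨posF e.2.2, hfb, ?_⟩
        rw [if_neg (not_not_intro hl0)]
        constructor
        · show posF e.2.2 ∈ (B (PmV hR B (Ex e.1.1 e.1.2)).val).image posF
          rw [PmV_anchor hInv hB (hInv.hC1 e he).1]
          exact Finset.mem_image_of_mem _ hmemB
        · exact ⟨negF (posF e.2.2), negF_posF_mem_PhiNat _,
            by simp [negF, posF, hvf], (negF_negF _).symm⟩
      · obtain ⟨hl0, hl1, huf, hvt, hmemB⟩ := hC2facts e he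
        subst hu hv hf
        refine ⟨negF (posF e.2.2), hfb, ?_⟩
        rw [if_pos (show lab R B (Ex e.2.1.1 e.2.1.2) ≠ 0 by rw [hl1]; decide)]
        refine ⟨⟨negF_posF_mem_PhiNat _, by simp [negF, posF, huf]⟩,
          posF e.2.2, ?_, rfl⟩
        show posF e.2.2 ∈ (B (PmV hR B (Ex e.2.1.1 e.2.1.2)).val).image posF
        rw [PmV_anchor hInv hB (hInv.hC2 e he).2.1]
        exact Finset.mem_image_of_mem _ hmemB
    · rcases fin2_ne_cases _ _ hne with ⟨h1, h0⟩ | ⟨h0, h1⟩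
      · have hex := exists_falsifier (PmV hR B u).isLt h0
        obtain ⟨hmem, hval⟩ := pickMu_spec hex
        refine ⟨posF (pickMu B (PmV hR B u).val v), ?_, ?_⟩
        · rw [fbF, dif_neg hcp, dflF, if_pos ⟨h1, h0⟩]
        · rw [if_neg (not_not_intro h0)]
          exact ⟨Finset.mem_image_of_mem _ hmem,
            negF (posF _), negF_posF_mem_PhiNat _,
            by simp [negF, posF, hval], (negF_negF _).symm⟩
      · have hex := exists_falsifier (PmV hR B v).isLt h0
        obtain ⟨hmem, hval⟩ := pickMu_spec hex
        refine ⟨negF (posF (pickMu B (PmV hR B v).val u)), ?_, ?_⟩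
        · rw [fbF, dif_neg hcp, dflF,
            if_neg (fun hc => by rw [h0] at hc; exact absurd hc.1 (by decide)),
            if_pos ⟨h0, h1⟩]
        · rw [if_pos (show lab R B v ≠ 0 by rw [h1]; decide)]
          refine ⟨⟨negF_posF_mem_PhiNat _, by simp [negF, posF, hval]⟩,
            posF _, Finset.mem_image_of_mem _ hmem, rfl⟩
  · -- Compat : C1 commitments
    intro e he
    exact fbF_comm (hR := hR) (B := B) hInv (Or.inl ⟨e, he, rfl, rfl, rfl⟩)
  · -- Compat : C2 commitments
    intro e he
    exact fbF_comm (hR := hR) (B := B) hInv (Or.inr ⟨e, he, rfl, rfl, rfl⟩)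
  · -- ConsistentH
    rintro p (hp | ⟨a, ha, hp⟩ | ⟨z, hz, hp⟩)
    · rw [hp]; exact lab_zeroX hB
    · rw [hp]; exact lab_anchor hInv hB ha
    · rw [hp]; exact lab_zpt hInv hB hz

end LeafTeacher

/-! ### Lower bound: the two branch updates -/

section Branches

variable {R M : ℕ}

/-- Anchor-creating branch update (current example gets label 1). -/
def stA (σ : LBSt) (c : ℕ) (vOpt : Option (ℕ × ℕ)) (ν : ℕ) : LBSt where
  r := σ.r + 1
  Rev := fun j => if j = c then insert ν (σ.Rev c) else σ.Rev j
  AL := insert (c, σ.r) σ.AL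
  ZL := σ.ZL
  C1 := insert ((c, σ.r), vOpt, ν) σ.C1
  C2 := σ.C2

/-- Zero-point-creating branch update (current example gets label 0). -/
def stZ (σ : LBSt) (c : ℕ) (a : ℕ × ℕ) (μ : ℕ) : LBSt where
  r := σ.r + 1
  Rev := fun j => if j = c then insert (enc σ.r c (2 * σ.r)) (σ.Rev c) else σ.Rev j
  AL := σ.AL
  ZL := insert (c, σ.r, enc σ.r c (2 * σ.r)) σ.ZL
  C1 := σ.C1
  C2 := insert ((c, σ.r), a, μ) σ.C2


@[simp] lemma stA_r (σ : LBSt) (c : ℕ) (v : Option (ℕ × ℕ)) (ν : ℕ) :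
    (stA σ c v ν).r = σ.r + 1 := rfl
@[simp] lemma stA_Rev (σ : LBSt) (c : ℕ) (v : Option (ℕ × ℕ)) (ν : ℕ) :
    (stA σ c v ν).Rev = fun j => if j = c then insert ν (σ.Rev c) else σ.Rev j := rfl
@[simp] lemma stA_AL (σ : LBSt) (c : ℕ) (v : Option (ℕ × ℕ)) (ν : ℕ) :
    (stA σ c v ν).AL = insert (c, σ.r) σ.AL := rfl
@[simp] lemma stA_ZL (σ : LBSt) (c : ℕ) (v : Option (ℕ × ℕ)) (ν : ℕ) :
    (stA σ c v ν).ZL = σ.ZL := rfl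
@[simp] lemma stA_C1 (σ : LBSt) (c : ℕ) (v : Option (ℕ × ℕ)) (ν : ℕ) :
    (stA σ c v ν).C1 = insert ((c, σ.r), v, ν) σ.C1 := rfl
@[simp] lemma stA_C2 (σ : LBSt) (c : ℕ) (v : Option (ℕ × ℕ)) (ν : ℕ) :
    (stA σ c v ν).C2 = σ.C2 := rfl
@[simp] lemma stZ_r (σ : LBSt) (c : ℕ) (a : ℕ × ℕ) (μ : ℕ) :
    (stZ σ c a μ).r = σ.r + 1 := rfl
@[simp] lemma stZ_Rev (σ : LBSt) (c : ℕ) (a : ℕ × ℕ) (μ : ℕ) :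
    (stZ σ c a μ).Rev
      = fun j => if j = c then insert (enc σ.r c (2 * σ.r)) (σ.Rev c) else σ.Rev j := rfl
@[simp] lemma stZ_AL (σ : LBSt) (c : ℕ) (a : ℕ × ℕ) (μ : ℕ) :
    (stZ σ c a μ).AL = σ.AL := rfl
@[simp] lemma stZ_ZL (σ : LBSt) (c : ℕ) (a : ℕ × ℕ) (μ : ℕ) :
    (stZ σ c a μ).ZL = insert (c, σ.r, enc σ.r c (2 * σ.r)) σ.ZL := rfl
@[simp] lemma stZ_C1 (σ : LBSt) (c : ℕ) (a : ℕ × ℕ) (μ : ℕ) :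
    (stZ σ c a μ).C1 = σ.C1 := rfl
@[simp] lemma stZ_C2 (σ : LBSt) (c : ℕ) (a : ℕ × ℕ) (μ : ℕ) :
    (stZ σ c a μ).C2 = insert ((c, σ.r), a, μ) σ.C2 := rfl

lemma Rev_mono_ins (σ : LBSt) (c ν : ℕ) (j : ℕ) :
    σ.Rev j ⊆ (if j = c then insert ν (σ.Rev c) else σ.Rev j) := by
  by_cases hj : j = c
  · rw [if_pos hj, hj]; exact Finset.subset_insert _ _
  · rw [if_neg hj]

lemma sum_rev_ins (σ : LBSt) (c ν : ℕ) (hcR : c < R) :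
    (∑ j ∈ Finset.range R, (if j = c then insert ν (σ.Rev c) else σ.Rev j).card)
      ≤ (∑ j ∈ Finset.range R, (σ.Rev j).card) + 1 := by
  have h1 : ∀ j ∈ Finset.range R,
      (if j = c then insert ν (σ.Rev c) else σ.Rev j).card
        ≤ (σ.Rev j).card + (if j = c then 1 else 0) := by
    intro j _
    by_cases hj : j = c
    · rw [if_pos hj, if_pos hj, hj]
      exact Finset.card_insert_le _ _
    · rw [if_neg hj, if_neg hj, add_zero]
  calc (∑ j ∈ Finset.range R, (if j = c then insert ν (σ.Rev c) else σ.Rev j).card)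
      ≤ ∑ j ∈ Finset.range R, ((σ.Rev j).card + (if j = c then 1 else 0)) :=
        Finset.sum_le_sum h1
    _ = (∑ j ∈ Finset.range R, (σ.Rev j).card) + 1 := by
        rw [Finset.sum_add_distrib, Finset.sum_ite_eq' (Finset.range R) c (fun _ => 1),
          if_pos (Finset.mem_range.2 hcR)]

section StA

variable {σ : LBSt} {c : ℕ} {vOpt : Option (ℕ × ℕ)} {ν : ℕ}

/-- conditions for the anchor branch coordinate -/
def stAok (σ : LBSt) (c : ℕ) (vOpt : Option (ℕ × ℕ)) (ν : ℕ) : Prop :=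
  (ν ∈ σ.Rev c ∨ ν = enc σ.r c 1) ∧ vEx vOpt ν = false ∧
  (vOpt = none ∨ ∃ z ∈ σ.ZL, vOpt = some (z.1, z.2.1))

lemma stA_idx (hInv : INV R M σ) (hok : stAok σ c vOpt ν) :
    slotOf ν = c ∧ ∀ rr, σ.r ≤ rr → idxOf ν ≠ 2 * rr := by
  rcases hok.1 with hν | hν
  · exact ⟨hInv.hRevSlot c ν hν, fun rr hrr => hInv.hRevIdx c ν hν rr hrr⟩
  · rw [hν]
    exact ⟨slotOf_enc _ _ _, fun rr _ => by rw [idxOf_enc]; omega⟩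

lemma INV_stA (hInv : INV R M σ) (hcR : c < R) (hcM : (σ.Rev c).card < M)
    (hok : stAok σ c vOpt ν) : INV R M (stA σ c vOpt ν) := by
  obtain ⟨hslot, hidx⟩ := stA_idx hInv hok
  constructor
  all_goals simp only [stA_r, stA_Rev, stA_AL, stA_ZL, stA_C1, stA_C2]
  · rintro a (rfl | ha)
    · exact ⟨hcR, Nat.lt_succ_self _⟩
    · exact ⟨(hInv.hA a ha).1, Nat.lt_succ_of_lt (hInv.hA a ha).2⟩
  · intro z hz
    exact ⟨(hInv.hZ z hz).1, Nat.lt_succ_of_lt (hInv.hZ z hz).2⟩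
  · rintro a (rfl | ha) a' (rfl | ha') h
    · rfl
    · exact absurd h.symm (by have := (hInv.hA a' ha').2; omega)
    · exact absurd h (by have := (hInv.hA a ha).2; omega)
    · exact hInv.hAA a ha a' ha' h
  · exact hInv.hZZ
  · rintro a (rfl | ha) z hz
    · have := (hInv.hZ z hz).2; omega
    · exact hInv.hAZ a ha z hz
  · intro j μ hμ
    by_cases hj : j = c
    · subst hj
      rw [if_pos rfl] at hμ
      rcases Finset.mem_insert.1 hμ with rfl | hμ
      · exact hslot
      · exact hInv.hRevSlot j μ hμ
    · rw [if_neg hj] at hμ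
      exact hInv.hRevSlot j μ hμ
  · intro j μ hμ rr hrr
    by_cases hj : j = c
    · subst hj
      rw [if_pos rfl] at hμ
      rcases Finset.mem_insert.1 hμ with rfl | hμ
      · exact hidx rr (by omega)
      · exact hInv.hRevIdx j μ hμ rr (by omega)
    · rw [if_neg hj] at hμ
      exact hInv.hRevIdx j μ hμ rr (by omega)
  · intro j μ hμ a haA haj
    have hamem : ∀ μ', μ' ∈ σ.Rev j → idxOf μ' ≠ 2 * a.2 := by
      intro μ' hμ'
      rcases haA with rfl | haA
      · exact hInv.hRevIdx j μ' hμ' σ.r le_rfl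
      · exact hInv.hRevA j μ' hμ' a haA haj
    by_cases hj : j = c
    · subst hj
      rw [if_pos rfl] at hμ
      rcases Finset.mem_insert.1 hμ with rfl | hμ
      · rcases haA with rfl | haA
        · exact hidx σ.r le_rfl
        · rcases hok.1 with hν | hν
          · exact hInv.hRevA j μ hν a haA haj
          · rw [hν, idxOf_enc]
            omega
      · exact hamem μ hμ
    · rw [if_neg hj] at hμ
      exact hamem μ hμ
  · intro j
    by_cases hj : j = c
    · subst hj
      rw [if_pos rfl]
      exact le_trans (Finset.card_insert_le _ _) (by omega)
    · rw [if_neg hj]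
      exact hInv.hRevCard j
  · rintro a (rfl | ha)
    · rw [if_pos rfl]
      exact ⟨ν, Finset.mem_insert_self _ _⟩
    · exact (hInv.hAnb a ha).mono (Rev_mono_ins σ c ν a.1)
  · intro z hz
    exact ⟨Rev_mono_ins σ c ν z.1 (hInv.hWz z hz).1, (hInv.hWz z hz).2⟩
  · rintro e (rfl | he)
    · refine ⟨Set.mem_insert _ _, ?_, hok.2.1, hok.2.2⟩
      rw [if_pos rfl]
      exact Finset.mem_insert_self _ _
    · obtain ⟨h1, h2, h3, h4⟩ := hInv.hC1 e he
      exact ⟨Set.mem_insert_of_mem _ h1, Rev_mono_ins σ c ν e.1.1 h2, h3, h4⟩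
  · intro e he
    obtain ⟨h1, h2, h3, h4⟩ := hInv.hC2 e he
    exact ⟨h1, Set.mem_insert_of_mem _ h2, Rev_mono_ins σ c ν e.2.1.1 h3, h4⟩
  · rintro e (rfl | he) e' (rfl | he') h
    · rfl
    · exact absurd h.symm (by have := (hInv.hA _ (hInv.hC1 e' he').1).2; simp at this ⊢; omega)
    · exact absurd h (by have := (hInv.hA _ (hInv.hC1 e he).1).2; simp at this ⊢; omega)
    · exact hInv.hC1key e he e' he' h
  · exact hInv.hC2key

lemma HSet_stA : HSet (stA σ c vOpt ν) = insert (Ex c σ.r, (1 : Fin 2)) (HSet σ) := by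
  ext p
  constructor
  · rintro (hp | ⟨a, ha, hp⟩ | ⟨z, hz, hp⟩)
    · exact Set.mem_insert_of_mem _ (Or.inl hp)
    · rcases ha with rfl | ha
      · exact Set.mem_insert_iff.2 (Or.inl hp)
      · exact Set.mem_insert_of_mem _ (Or.inr (Or.inl ⟨a, ha, hp⟩))
    · exact Set.mem_insert_of_mem _ (Or.inr (Or.inr ⟨z, hz, hp⟩))
  · rintro (hp | hp | ⟨a, ha, hp⟩ | ⟨z, hz, hp⟩)
    · exact Or.inr (Or.inl ⟨(c, σ.r), Set.mem_insert _ _, hp⟩)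
    · exact Or.inl hp
    · exact Or.inr (Or.inl ⟨a, Set.mem_insert_of_mem _ ha, hp⟩)
    · exact Or.inr (Or.inr ⟨z, hz, hp⟩)

lemma KK_stA_sub (hInv : INV R M σ) (hcR : c < R) (hcM : (σ.Rev c).card < M)
    (hok : stAok σ c vOpt ν) :
    KK R M (stA σ c vOpt ν) ⊆
      TRestrict (KK R M σ) (Ex c σ.r) (vEx vOpt) 1 (posF ν) := by
  rintro T ⟨hRCM, ⟨B, hBOK, hlab⟩, hc1, hc2⟩
  have hBOK' : ExtOK R M σ B := by
    intro j hj
    obtain ⟨hsub, hne, hcard, hmem⟩ := hBOK j hj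
    exact ⟨subset_trans (Rev_mono_ins σ c ν j) hsub, hne, hcard,
      fun μ hμ => ⟨(hmem μ hμ).1,
        fun a ha haj => (hmem μ hμ).2 a (Set.mem_insert_of_mem _ ha) haj⟩⟩
  refine ⟨⟨hRCM, ⟨B, hBOK', hlab⟩, fun e he => hc1 e (Set.mem_insert_of_mem _ he),
    fun e he => hc2 e he⟩, ?_, ?_⟩
  · rw [hlab]
    exact lab_anchor (INV_stA hInv hcR hcM hok) hBOK
      (a := (c, σ.r)) (Set.mem_insert _ _)
  · exact hc1 ((c, σ.r), vOpt, ν) (Set.mem_insert _ _)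

end StA

section StZ

variable {σ : LBSt} {c : ℕ} {a : ℕ × ℕ} {μ : ℕ}

def stZok (σ : LBSt) (c : ℕ) (a : ℕ × ℕ) (μ : ℕ) : Prop :=
  a ∈ σ.AL ∧ ((a.1 = c ∧ μ = enc σ.r c (2 * σ.r)) ∨ (a.1 ≠ c ∧ μ ∈ σ.Rev a.1))

lemma INV_stZ (hInv : INV R M σ) (hcR : c < R) (hcM : (σ.Rev c).card < M)
    (hok : stZok σ c a μ) : INV R M (stZ σ c a μ) := by
  constructor
  all_goals simp only [stZ_r, stZ_Rev, stZ_AL, stZ_ZL, stZ_C1, stZ_C2]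
  · intro a' ha'
    exact ⟨(hInv.hA a' ha').1, Nat.lt_succ_of_lt (hInv.hA a' ha').2⟩
  · rintro z (rfl | hz)
    · exact ⟨hcR, Nat.lt_succ_self _⟩
    · exact ⟨(hInv.hZ z hz).1, Nat.lt_succ_of_lt (hInv.hZ z hz).2⟩
  · exact hInv.hAA
  · rintro z (rfl | hz) z' (rfl | hz') h
    · rfl
    · exact absurd h.symm (by have := (hInv.hZ z' hz').2; simp at this ⊢; omega)
    · exact absurd h (by have := (hInv.hZ z hz).2; simp at this ⊢; omega)
    · exact hInv.hZZ z hz z' hz' h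
  · rintro a' ha' z (rfl | hz)
    · have := (hInv.hA a' ha').2; simp; omega
    · exact hInv.hAZ a' ha' z hz
  · intro j μ' hμ'
    by_cases hj : j = c
    · subst hj
      rw [if_pos rfl] at hμ'
      rcases Finset.mem_insert.1 hμ' with rfl | hμ'
      · exact slotOf_enc _ _ _
      · exact hInv.hRevSlot j μ' hμ'
    · rw [if_neg hj] at hμ'
      exact hInv.hRevSlot j μ' hμ'
  · intro j μ' hμ' rr hrr
    by_cases hj : j = c
    · subst hj
      rw [if_pos rfl] at hμ'
      rcases Finset.mem_insert.1 hμ' with rfl | hμ'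
      · rw [idxOf_enc]; omega
      · exact hInv.hRevIdx j μ' hμ' rr (by omega)
    · rw [if_neg hj] at hμ'
      exact hInv.hRevIdx j μ' hμ' rr (by omega)
  · intro j μ' hμ' a' ha' haj
    by_cases hj : j = c
    · subst hj
      rw [if_pos rfl] at hμ'
      rcases Finset.mem_insert.1 hμ' with rfl | hμ'
      · rw [idxOf_enc]
        have := (hInv.hA a' ha').2; omega
      · exact hInv.hRevA j μ' hμ' a' ha' haj
    · rw [if_neg hj] at hμ'
      exact hInv.hRevA j μ' hμ' a' ha' haj
  · intro j
    by_cases hj : j = c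
    · subst hj
      rw [if_pos rfl]
      exact le_trans (Finset.card_insert_le _ _) (by omega)
    · rw [if_neg hj]
      exact hInv.hRevCard j
  · intro a' ha'
    exact (hInv.hAnb a' ha').mono (Rev_mono_ins σ c _ a'.1)
  · rintro z (rfl | hz)
    · refine ⟨?_, ?_⟩
      · rw [if_pos rfl]
        exact Finset.mem_insert_self _ _
      · rw [Ex_false_iff, idxOf_enc]
        exact Or.inr rfl
    · exact ⟨Rev_mono_ins σ c _ z.1 (hInv.hWz z hz).1, (hInv.hWz z hz).2⟩
  · intro e he
    obtain ⟨h1, h2, h3, h4⟩ := hInv.hC1 e he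
    refine ⟨h1, Rev_mono_ins σ c _ e.1.1 h2, h3, ?_⟩
    rcases h4 with h4 | ⟨z, hz, h4⟩
    · exact Or.inl h4
    · exact Or.inr ⟨z, Set.mem_insert_of_mem _ hz, h4⟩
  · rintro e (rfl | he)
    · refine ⟨⟨enc σ.r c (2 * σ.r), Set.mem_insert _ _⟩, hok.1, ?_, ?_⟩
      · rcases hok.2 with ⟨hac, rfl⟩ | ⟨hac, hμ⟩
        · rw [hac, if_pos rfl]
          exact Finset.mem_insert_self _ _
        · rw [if_neg hac]
          exact hμ
      · rcases hok.2 with ⟨hac, rfl⟩ | ⟨hac, hμ⟩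
        · rw [Ex_false_iff, idxOf_enc]
          exact Or.inr rfl
        · rw [Ex_false_iff]
          exact Or.inl (by rw [hInv.hRevSlot a.1 μ hμ]; exact hac)
    · obtain ⟨⟨w, hw⟩, h2, h3, h4⟩ := hInv.hC2 e he
      exact ⟨⟨w, Set.mem_insert_of_mem _ hw⟩, h2, Rev_mono_ins σ c _ e.2.1.1 h3, h4⟩
  · exact hInv.hC1key
  · rintro e (rfl | he) e' (rfl | he') h
    · rfl
    · obtain ⟨⟨w, hw⟩, _, _, _⟩ := hInv.hC2 e' he'
      exact absurd h.symm (by have := (hInv.hZ _ hw).2; simp at this ⊢; omega)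
    · obtain ⟨⟨w, hw⟩, _, _, _⟩ := hInv.hC2 e he
      exact absurd h (by have := (hInv.hZ _ hw).2; simp at this ⊢; omega)
    · exact hInv.hC2key e he e' he' h

lemma HSet_stZ : HSet (stZ σ c a μ) = insert (Ex c σ.r, (0 : Fin 2)) (HSet σ) := by
  ext p
  constructor
  · rintro (hp | ⟨a', ha', hp⟩ | ⟨z, hz, hp⟩)
    · exact Set.mem_insert_of_mem _ (Or.inl hp)
    · exact Set.mem_insert_of_mem _ (Or.inr (Or.inl ⟨a', ha', hp⟩))
    · rcases hz with rfl | hz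
      · exact Set.mem_insert_iff.2 (Or.inl hp)
      · exact Set.mem_insert_of_mem _ (Or.inr (Or.inr ⟨z, hz, hp⟩))
  · rintro (hp | hp | ⟨a', ha', hp⟩ | ⟨z, hz, hp⟩)
    · exact Or.inr (Or.inr ⟨(c, σ.r, enc σ.r c (2 * σ.r)), Set.mem_insert _ _, hp⟩)
    · exact Or.inl hp
    · exact Or.inr (Or.inl ⟨a', ha', hp⟩)
    · exact Or.inr (Or.inr ⟨z, Set.mem_insert_of_mem _ hz, hp⟩)

lemma KK_stZ_sub (hInv : INV R M σ) (hcR : c < R) (hcM : (σ.Rev c).card < M)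
    (hok : stZok σ c a μ) :
    KK R M (stZ σ c a μ) ⊆
      TRestrict (KK R M σ) (Ex c σ.r) (Ex a.1 a.2) 0 (negF (posF μ)) := by
  rintro T ⟨hRCM, ⟨B, hBOK, hlab⟩, hc1, hc2⟩
  have hBOK' : ExtOK R M σ B := by
    intro j hj
    obtain ⟨hsub, hne, hcard, hmem⟩ := hBOK j hj
    exact ⟨subset_trans (Rev_mono_ins σ c _ j) hsub, hne, hcard, hmem⟩
  refine ⟨⟨hRCM, ⟨B, hBOK', hlab⟩, fun e he => hc1 e he,
    fun e he => hc2 e (Set.mem_insert_of_mem _ he)⟩, ?_, ?_⟩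
  · rw [hlab]
    exact lab_zpt (INV_stZ hInv hcR hcM hok) hBOK
      (z := (c, σ.r, enc σ.r c (2 * σ.r))) (Set.mem_insert _ _)
  · exact hc2 ((c, σ.r), a, μ) (Set.mem_insert _ _)

end StZ

end Branches

/-! ### Lower bound: main induction -/

section LowerMain

variable {R M : ℕ}

noncomputable def aOf (σ : LBSt) (u : ℕ → Bool) : ℕ × ℕ :=
  if h : ∃ a ∈ σ.AL, u = Ex a.1 a.2 then h.choose else (0, 0)

lemma aOf_spec (σ : LBSt) {a : ℕ × ℕ} (ha : a ∈ σ.AL) :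
    aOf σ (Ex a.1 a.2) = a := by
  have hex : ∃ a' ∈ σ.AL, Ex a.1 a.2 = Ex a'.1 a'.2 := ⟨a, ha, rfl⟩
  rw [aOf, dif_pos hex]
  obtain ⟨_, heq⟩ := hex.choose_spec
  obtain ⟨h1, h2⟩ := Ex_inj heq
  exact Prod.ext h1.symm h2.symm

noncomputable def zOf (σ : LBSt) (u : ℕ → Bool) : ℕ × ℕ × ℕ :=
  if h : ∃ z ∈ σ.ZL, u = Ex z.1 z.2.1 then h.choose else (0, 0, 0)

lemma zOf_spec (hInv : INV R M σ) {z : ℕ × ℕ × ℕ} (hz : z ∈ σ.ZL) :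
    zOf σ (Ex z.1 z.2.1) = z := by
  have hex : ∃ z' ∈ σ.ZL, Ex z.1 z.2.1 = Ex z'.1 z'.2.1 := ⟨z, hz, rfl⟩
  rw [zOf, dif_pos hex]
  obtain ⟨hz', heq⟩ := hex.choose_spec
  exact hInv.hZZ _ hz' z hz (Ex_inj heq).2.symm

noncomputable def nu0 (σ : LBSt) (c : ℕ) : ℕ :=
  if h : (σ.Rev c).Nonempty then h.choose else enc σ.r c 1

lemma nu0_ok (σ : LBSt) (c : ℕ) : nu0 σ c ∈ σ.Rev c ∨ nu0 σ c = enc σ.r c 1 := by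
  rw [nu0]
  by_cases h : (σ.Rev c).Nonempty
  · rw [dif_pos h]; exact Or.inl h.choose_spec
  · rw [dif_neg h]; exact Or.inr rfl

lemma nu0_slot (hInv : INV R M σ) (c : ℕ) : slotOf (nu0 σ c) = c := by
  rcases nu0_ok σ c with h | h
  · exact hInv.hRevSlot c _ h
  · rw [h]; exact slotOf_enc _ _ _

noncomputable def muA (σ : LBSt) (c : ℕ) (a : ℕ × ℕ) : ℕ :=
  if a.1 = c then enc σ.r c (2 * σ.r)
  else if h : (σ.Rev a.1).Nonempty then h.choose else 0

lemma muA_ok (hInv : INV R M σ) {a : ℕ × ℕ} (ha : a ∈ σ.AL) (c : ℕ) :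
    (a.1 = c ∧ muA σ c a = enc σ.r c (2 * σ.r)) ∨
    (a.1 ≠ c ∧ muA σ c a ∈ σ.Rev a.1) := by
  rw [muA]
  by_cases h : a.1 = c
  · rw [if_pos h]; exact Or.inl ⟨h, rfl⟩
  · rw [if_neg h, dif_pos (hInv.hAnb a ha)]
    exact Or.inr ⟨h, (hInv.hAnb a ha).choose_spec⟩

noncomputable def yR : (ℕ → Bool) × Fin 2 → Fin 2 :=
  fun p => if p.2 = 0 then 1 else 0

lemma yR_zero (u : ℕ → Bool) : yR (u, 0) = 1 := if_pos rfl
lemma yR_one (u : ℕ → Bool) : yR (u, 1) = 0 := if_neg ((by decide : ¬(1 : Fin 2) = 0))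

noncomputable def nuZ (σ : LBSt) (c : ℕ) (u : ℕ → Bool) : ℕ :=
  if (zOf σ u).1 = c then (zOf σ u).2.2 else nu0 σ c

noncomputable def phiR (σ : LBSt) (c : ℕ) : (ℕ → Bool) × Fin 2 → ((ℕ → Bool) → Bool) :=
  fun p => if p.2 = 0 then
      (if p.1 = zeroX then posF (nu0 σ c) else posF (nuZ σ c p.1))
    else negF (posF (muA σ c (aOf σ p.1)))

lemma phiR_one (σ : LBSt) (c : ℕ) (u : ℕ → Bool) :
    phiR σ c (u, 1) = negF (posF (muA σ c (aOf σ u))) := if_neg ((by decide : ¬(1 : Fin 2) = 0))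

lemma phiR_zeroX (σ : LBSt) (c : ℕ) :
    phiR σ c (zeroX, 0) = posF (nu0 σ c) := (if_pos rfl).trans (if_pos rfl)

lemma phiR_zpt (σ : LBSt) (c : ℕ) {u : ℕ → Bool} (hu : u ≠ zeroX) :
    phiR σ c (u, 0) = posF (nuZ σ c u) := (if_pos rfl).trans (if_neg hu)

lemma sum_stA (σ : LBSt) (c : ℕ) (v : Option (ℕ × ℕ)) (ν : ℕ) (hcR : c < R) :
    (∑ j ∈ Finset.range R, ((stA σ c v ν).Rev j).card)
      ≤ (∑ j ∈ Finset.range R, (σ.Rev j).card) + 1 := by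
  simp only [stA_Rev]
  exact sum_rev_ins σ c ν hcR

lemma sum_stZ (σ : LBSt) (c : ℕ) (a : ℕ × ℕ) (μ : ℕ) (hcR : c < R) :
    (∑ j ∈ Finset.range R, ((stZ σ c a μ).Rev j).card)
      ≤ (∑ j ∈ Finset.range R, (σ.Rev j).card) + 1 := by
  simp only [stZ_Rev]
  exact sum_rev_ins σ c _ hcR

set_option maxHeartbeats 2000000 in
lemma lower_main (R M : ℕ) (hR : 0 < R) (hM : 0 < M) :
    ∀ (n : ℕ) (σ : LBSt), INV R M σ →
      (∑ j ∈ Finset.range R, (σ.Rev j).card) + n ≤ R * M →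
      ShatteredDFFT PhiNat (KK R M σ) (HSet σ) n := by
  intro n
  induction n with
  | zero =>
    intro σ hInv _
    exact ShatteredDFFT.leaf _ _ (leaf_teacher hR hM hInv)
  | succ n ih =>
    intro σ hInv hsum
    have hc : ∃ c, c < R ∧ (σ.Rev c).card < M := by
      by_contra hcon
      push_neg at hcon
      have hge : R * M ≤ ∑ j ∈ Finset.range R, (σ.Rev j).card := by
        calc R * M = ∑ _j ∈ Finset.range R, M := by
              rw [Finset.sum_const, Finset.card_range, smul_eq_mul]
          _ ≤ ∑ j ∈ Finset.range R, (σ.Rev j).card :=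
              Finset.sum_le_sum (fun j hj => hcon j (Finset.mem_range.1 hj))
      omega
    obtain ⟨c, hcR, hcM⟩ := hc
    refine ShatteredDFFT.node _ _ n (Ex c σ.r) yR (phiR σ c) ?_ ?_ ?_
    · -- hne
      intro p _
      by_cases h2 : p.2 = 0
      · rw [yR, if_pos h2, h2]; decide
      · rw [yR, if_neg h2]
        exact fun hq => h2 hq.symm
    · -- hΦ
      intro p _
      rw [phiR]
      by_cases h2 : p.2 = 0
      · rw [if_pos h2]
        by_cases h1 : p.1 = zeroX
        · rw [if_pos h1]; exact posF_mem_PhiNat _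
        · rw [if_neg h1]; exact posF_mem_PhiNat _
      · rw [if_neg h2]; exact negF_posF_mem_PhiNat _
    · -- branches
      rintro p (hp | ⟨a, ha, hp⟩ | ⟨z, hz, hp⟩)
      · -- the root pair (0̄, 0)
        subst hp
        simp only [yR_zero, phiR_zeroX]
        have hok : stAok σ c none (nu0 σ c) :=
          ⟨nu0_ok σ c, rfl, Or.inl rfl⟩
        have hsh := ih (stA σ c none (nu0 σ c)) (INV_stA hInv hcR hcM hok)
          (by have := sum_stA σ c none (nu0 σ c) hcR; omega)
        rw [HSet_stA] at hsh
        exact shattered_mono_s5 n _ _ _ (KK_stA_sub hInv hcR hcM hok) hsh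
      · -- an anchor pair (a, 1)
        subst hp
        simp only [yR_one, phiR_one, aOf_spec σ ha]
        have hok : stZok σ c a (muA σ c a) := ⟨ha, by
          rcases muA_ok hInv ha c with ⟨h1, h2⟩ | ⟨h1, h2⟩
          · exact Or.inl ⟨h1, h2⟩
          · exact Or.inr ⟨h1, h2⟩⟩
        have hsh := ih (stZ σ c a (muA σ c a)) (INV_stZ hInv hcR hcM hok)
          (by have := sum_stZ σ c a (muA σ c a) hcR; omega)
        rw [HSet_stZ] at hsh
        exact shattered_mono_s5 n _ _ _ (KK_stZ_sub hInv hcR hcM hok) hsh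
      · -- a zero pair (z, 0)
        subst hp
        simp only [yR_zero, phiR_zpt σ c (Ex_ne_zeroX z.1 z.2.1)]
        rw [nuZ, zOf_spec hInv hz]
        by_cases hz1 : z.1 = c
        · rw [if_pos hz1]
          have hok : stAok σ c (some (z.1, z.2.1)) z.2.2 := by
            refine ⟨Or.inl ?_, (hInv.hWz z hz).2, Or.inr ⟨z, hz, rfl⟩⟩
            rw [← hz1]
            exact (hInv.hWz z hz).1
          have hsh := ih (stA σ c (some (z.1, z.2.1)) z.2.2) (INV_stA hInv hcR hcM hok)
            (by have := sum_stA σ c (some (z.1, z.2.1)) z.2.2 hcR; omega)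
          rw [HSet_stA] at hsh
          exact shattered_mono_s5 n _ _ _ (KK_stA_sub hInv hcR hcM hok) hsh
        · rw [if_neg hz1]
          have hok : stAok σ c (some (z.1, z.2.1)) (nu0 σ c) := by
            refine ⟨nu0_ok σ c, ?_, Or.inr ⟨z, hz, rfl⟩⟩
            show Ex z.1 z.2.1 (nu0 σ c) = false
            rw [Ex_false_iff]
            exact Or.inl (by rw [nu0_slot hInv c]; exact fun hh => hz1 hh.symm)
          have hsh := ih (stA σ c (some (z.1, z.2.1)) (nu0 σ c)) (INV_stA hInv hcR hcM hok)
            (by have := sum_stA σ c (some (z.1, z.2.1)) (nu0 σ c) hcR; omega)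
          rw [HSet_stA] at hsh
          exact shattered_mono_s5 n _ _ _ (KK_stA_sub hInv hcR hcM hok) hsh

end LowerMain

/-! ### Final assembly -/

def sigma0 : LBSt := ⟨0, fun _ => ∅, ∅, ∅, ∅, ∅⟩

lemma INV_sigma0 (R M : ℕ) : INV R M sigma0 := by
  constructor <;>
    first
      | (intro a ha; exact absurd ha (Set.not_mem_empty _))
      | (intro j ν hν; exact absurd hν (Finset.not_mem_empty _))
      | (intro j; simp [sigma0])
      | (rintro a ⟨⟩)

lemma HSet_sigma0 : HSet sigma0 = {(zeroX, (0 : Fin 2))} := by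
  ext p
  constructor
  · rintro (hp | ⟨a, ha, _⟩ | ⟨z, hz, _⟩)
    · exact hp
    · exact absurd ha (Set.notMem_empty _)
    · exact absurd hz (Set.notMem_empty _)
  · intro hp
    exact Or.inl hp

/-- **Theorem (exact DFF dimension of the relaxed component model on the
natural feature construction).** Let `(X, Φ)` be the natural feature
construction (`X = {0,1}^ℕ`, `Φ` the coordinate features and their
negations), let the label set be `{0, 1}` (that is, `L = 1`), and let
`H = {(0̄, 0)}`.  Given `R, M ∈ ℕ`, let `𝒯` be the relaxed component model
teacher class with parameters `(1, R, M)` over `(X, {0,1}, Φ)`.  Then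
`DFFdim(𝒯, H) = R · M`. -/
theorem DFFdim_RCM_natural_eq (R M : ℕ) :
    DFFdim PhiNat (RCMClass (ℕ → Bool) PhiNat 1 R M)
      {((fun _ => false : ℕ → Bool), (0 : Fin 2))} = ((R * M : ℕ) : ℕ∞) := by
  rw [DFFdim]
  apply le_antisymm
  · refine sSup_le ?_
    rintro d ⟨n, rfl, hsh⟩
    have hA : ∀ u : ℕ → Bool,
        (u, (1 : Fin 2)) ∈ ({((fun _ => false : ℕ → Bool), (0 : Fin 2))} :
          Set ((ℕ → Bool) × Fin 2)) ↔ u ∈ (∅ : Finset (ℕ → Bool)) := by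
      intro u
      constructor
      · intro hu
        rw [Set.mem_singleton_iff] at hu
        exact absurd (congrArg Prod.snd hu) ((by decide : ¬(1 : Fin 2) = 0))
      · intro hu
        exact absurd hu (Finset.notMem_empty _)
    have hinv : ∀ T ∈ RCMClass (ℕ → Bool) PhiNat 1 R M,
        ConsistentH T {((fun _ => false : ℕ → Bool), (0 : Fin 2))} →
        ∀ (D : RCMData (ℕ → Bool) PhiNat 1 R M) (Pm : (ℕ → Bool) → Fin R),
        IsRCMLabel D T.label → IsPrimaryMap D T.label Pm →
        RCMFeedbackOK D T.label Pm T.feedback →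
        (∀ a ∈ (∅ : Finset (ℕ → Bool)), ∀ g ∈ (fun _ => (∅ : Finset ((ℕ → Bool) → Bool))) a,
          g ∈ D.S (Pm a)) ∧
        (∀ a ∈ (∅ : Finset (ℕ → Bool)), ∀ b ∈ (∅ : Finset (ℕ → Bool)), a ≠ b → Pm a ≠ Pm b) := by
      intro T _ _ D Pm _ _ _
      exact ⟨fun a ha => absurd ha (Finset.notMem_empty _),
        fun a ha => absurd ha (Finset.notMem_empty _)⟩
    have h := upper_aux R M n (RCMClass (ℕ → Bool) PhiNat 1 R M)
      {((fun _ => false : ℕ → Bool), (0 : Fin 2))} ∅ (fun _ => ∅)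
      (fun T hT => hT) rfl hA hinv hsh
    simp only [Finset.sum_empty, add_zero] at h
    exact_mod_cast h
  · rcases Nat.eq_zero_or_pos (R * M) with h0 | hpos
    · rw [h0]
      exact zero_le
    · have hR : 0 < R := by
        rcases Nat.eq_zero_or_pos R with rfl | h
        · simp at hpos
        · exact h
      have hM : 0 < M := by
        rcases Nat.eq_zero_or_pos M with rfl | h
        · simp at hpos
        · exact h
      refine le_sSup ⟨R * M, rfl, ?_⟩
      have h := lower_main R M hR hM (R * M) sigma0 (INV_sigma0 R M)
        (by simp [sigma0])
      rw [HSet_sigma0] at h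
      exact shattered_mono_s5 _ _ _ _ (fun T hT => hT.1) h
end

section
/- For any hypothesis class F ⊆ Y^X (with Y finite), DFFdim(OtD(F)) ≥ Ldim(F). -/
open scoped Classical

/-- The indicator feature of a single element. -/
noncomputable def indF {Z : Type} (w : Z) : Z → Bool :=
  fun z => decide (z = w)

/-- The feature set of the mapping `OtD`: all singleton indicator features on
`X ⊕ Y` (the example domain `X` enlarged by a fresh example `⋆_y = inr y`
for every label `y`). -/
noncomputable def OtDPhi (X Y : Type) : Set ((X ⊕ Y) → Bool) :=
  {φ | ∃ w : X ⊕ Y, φ = indF w}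

/-- The history of the mapping `OtD`: each fresh example `⋆_y` labeled `y`. -/
def OtDHist (X Y : Type) : Set ((X ⊕ Y) × Y) :=
  {p | ∃ y : Y, p = (Sum.inr y, y)}

/-- The teacher class of the mapping `OtD` applied to a hypothesis class `F`:
for `f ∈ F`, the teacher labels by the extension of `f` sending `⋆_y` to `y`,
and its feature feedback on `(x, x')` is the indicator of `x`. -/
noncomputable def OtDClass {X Y : Type} (F : Set (X → Y)) :
    Set (Teacher (X ⊕ Y) Y (OtDPhi X Y)) :=
  {T | ∃ f ∈ F, T.label = Sum.elim f id ∧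
    T.feedback = fun x _ => some (indF x)}

/-- The examples appearing in a history. -/
def HistX {X Y : Type} (H : Set (X × Y)) : Set X := {x | ∃ y : Y, (x, y) ∈ H}

/-- The mapping `DtO` from DFF to Online Learning: the class of restrictions
of the labeling functions of `𝒯` to the examples not appearing in `H`. -/
def DtO {X Y : Type} {Φ : Set (X → Bool)} (𝒯 : Set (Teacher X Y Φ))
    (H : Set (X × Y)) : Set ((((HistX H)ᶜ : Set X)) → Y) :=
  {g | ∃ T ∈ 𝒯, g = fun x => T.label x.1}

/-- `LShat F n` holds iff there is a Littlestone tree of height `n` shattered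
by the hypothesis class `F`: a complete binary tree with examples at internal
nodes, two distinct labels on the outgoing edges of each internal node, and
every root-to-leaf path realized by some hypothesis of `F`. -/
inductive LShat {X Y : Type} : Set (X → Y) → ℕ → Prop
  | leaf (F : Set (X → Y)) (h : F.Nonempty) : LShat F 0
  | node (F : Set (X → Y)) (n : ℕ) (x : X) (y₁ y₂ : Y) (hne : y₁ ≠ y₂)
      (h₁ : LShat {f ∈ F | f x = y₁} n) (h₂ : LShat {f ∈ F | f x = y₂} n) :
      LShat F (n + 1)

/-- The (multiclass) Littlestone dimension of a hypothesis class: the maximal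
height of a Littlestone tree for it (possibly infinite). -/
noncomputable def Ldim {X Y : Type} (F : Set (X → Y)) : ℕ∞ :=
  sSup {d : ℕ∞ | ∃ n : ℕ, d = n ∧ LShat F n}

/-- `F` admits an infinite-depth Littlestone tree: a binary branching
assignment of examples and pairs of distinct labels to finite binary
sequences such that every finite branch is consistent with some hypothesis
of `F`. -/
def InfLTree {X Y : Type} (F : Set (X → Y)) : Prop :=
  ∃ (x : List Bool → X) (y : List Bool → Bool → Y),
    (∀ s : List Bool, y s false ≠ y s true) ∧
    ∀ b : List Bool, ∃ f ∈ F,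
      ∀ (s : List Bool) (c : Bool), (s ++ [c]) <+: b → f (x s) = y s c

lemma OtDClass_restrict {X Y : Type} (G : Set (X → Y)) (x₀ : X) (xh : X ⊕ Y) (y : Y) :
    TRestrict (OtDClass G) (Sum.inl x₀) xh y (indF (Sum.inl x₀))
      = OtDClass {f ∈ G | f x₀ = y} := by
  ext T
  constructor
  · rintro ⟨⟨f, hf, hl, hfb⟩, hy, -⟩
    exact ⟨f, ⟨hf, by simpa [hl] using hy⟩, hl, hfb⟩
  · rintro ⟨f, ⟨hf, hfx⟩, hl, hfb⟩
    exact ⟨⟨f, hf, hl, hfb⟩, by simp [hl, hfx], by simp [hfb]⟩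

/-- The canonical OtD teacher associated to a function. -/
noncomputable def OtDTeacher {X Y : Type} (f : X → Y) :
    Teacher (X ⊕ Y) Y (OtDPhi X Y) where
  label := Sum.elim f id
  feedback := fun x _ => some (indF x)
  feedback_spec := by
    intro x xh hne
    refine ⟨indF x, ⟨x, rfl⟩, rfl, by simp [indF], ?_⟩
    have : xh ≠ x := fun h => hne (by rw [h])
    simp [indF, this]

lemma shat_of_LShat {X Y : Type} {n : ℕ} {G : Set (X → Y)}
    (h : LShat G n) :
    ∀ H : Set ((X ⊕ Y) × Y),
      (∀ f ∈ G, ∀ p ∈ H, Sum.elim f id p.1 = p.2) →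
      ShatteredDFFT (OtDPhi X Y) (OtDClass G) H n := by
  induction h with
  | leaf G hG =>
    intro H hcons
    obtain ⟨f, hf⟩ := hG
    exact ShatteredDFFT.leaf _ _
      ⟨OtDTeacher f, ⟨f, hf, rfl, rfl⟩, fun p hp => hcons f hf p hp⟩
  | node G n x y₁ y₂ hne h₁ h₂ ih₁ ih₂ =>
    intro H hcons
    refine ShatteredDFFT.node _ _ _ (Sum.inl x)
      (fun p => if p.2 = y₁ then y₂ else y₁) (fun _ => indF (Sum.inl x))
      ?_ (fun p _ => ⟨_, rfl⟩) ?_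
    · intro p _
      by_cases hpy : p.2 = y₁
      · simp [hpy]; exact fun h => hne h.symm
      · simp [hpy]; exact fun h => hpy h.symm
    · intro p _
      rw [OtDClass_restrict]
      by_cases hpy : p.2 = y₁
      · simp only [hpy, if_pos rfl]
        refine ih₂ _ ?_
        rintro f hf q (rfl | hq)
        · exact hf.2
        · exact hcons f hf.1 q hq
      · simp only [if_neg hpy]
        refine ih₁ _ ?_
        rintro f hf q (rfl | hq)
        · exact hf.2
        · exact hcons f hf.1 q hq

/-- **Lemma (`OtD` does not decrease the dimension).** For any hypothesis
class `F ⊆ Y^X` (with `Y` finite), `DFFdim(OtD(F)) ≥ Ldim(F)`. -/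
theorem DFFdim_OtD_ge_Ldim {X Y : Type} [Finite Y] (F : Set (X → Y)) :
    Ldim F ≤ DFFdim (OtDPhi X Y) (OtDClass F) (OtDHist X Y) := by
  apply sSup_le_sSup
  rintro d ⟨n, rfl, hn⟩
  refine ⟨n, rfl, shat_of_LShat hn _ ?_⟩
  rintro f hf p ⟨y, rfl⟩
  rfl
end

section
/- Let (X,Φ) be the natural feature construction with Y = {0,1}. For each n ∈ ℕ let T_n = (f_n, ψ_n) where ψ_n(x,x') = f_n if f_n(x) = 1 and f_n(x') = 0, ψ_n(x,x') = ¬f_n if f_n(x) = 0 and f_n(x') = 1, and ψ_n(x,x') = ⊥ otherwise. Let 𝒯 = {T_n : n ∈ ℕ} and H = {(0̄,0),(1̄,1)}. Then DFFdim(𝒯,H) = 1, while Ldim(DtO(𝒯,H)) = ∞; moreover, there exists an infinite-depth Littlestone tree for DtO(𝒯,H) (every root-to-leaf path of every finite truncation is consistent with some hypothesis in the class, and the tree extends to infinite depth). -/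
open scoped Classical

/-- The feature feedback function of the teacher `T_n` of the separation
example: on a pair of examples on which the coordinate feature `f_n`
disagrees, return `f_n` or its negation accordingly, and `⊥` otherwise. -/
def psiCoord (n : ℕ) : (ℕ → Bool) → (ℕ → Bool) → Option ((ℕ → Bool) → Bool) :=
  fun x x' =>
    if x n = true ∧ x' n = false then some (fun z => z n)
    else if x n = false ∧ x' n = true then some (fun z => !(z n))
    else none

/-- The teacher class of the separation example: for every `n`, the teacher
labeling by the coordinate feature `f_n` with feature feedback `ψ_n`. -/
def sepClass : Set (Teacher (ℕ → Bool) Bool PhiNat) :=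
  {T | ∃ n : ℕ, T.label = (fun x => x n) ∧ T.feedback = psiCoord n}

/-- The history of the separation example: the all-zeros sequence labeled `0`
and the all-ones sequence labeled `1`. -/
def sepHist : Set ((ℕ → Bool) × Bool) :=
  {((fun _ => false : ℕ → Bool), false), ((fun _ => true : ℕ → Bool), true)}


/-! ### Auxiliary lemmas for the separation theorem -/

/-- The teacher `T_n` of the separation example. -/
noncomputable def Tcoord (n : ℕ) : Teacher (ℕ → Bool) Bool PhiNat where
  label := fun z => z n
  feedback := psiCoord n
  feedback_spec := by
    intro x xh h
    simp only [ne_eq] at h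
    rcases Bool.eq_false_or_eq_true (x n) with hx | hx
    · have hxh : xh n = false := by
        cases hxn : xh n
        · rfl
        · exact absurd (hx.trans hxn.symm) h
      exact ⟨fun z => z n, Or.inl ⟨n, rfl⟩, by simp [psiCoord, hx, hxh], hx, hxh⟩
    · have hxh : xh n = true := by
        cases hxn : xh n
        · exact absurd (hx.trans hxn.symm) h
        · rfl
      exact ⟨fun z => !(z n), Or.inr ⟨n, rfl⟩, by simp [psiCoord, hx, hxh],
        by simp [hx], by simp [hxh]⟩

lemma coordfun_inj {n k : ℕ} (h : (fun z : ℕ → Bool => z n) = fun z : ℕ → Bool => z k) :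
    n = k := by
  have h2 := congrFun h (fun i => decide (i = n))
  simp at h2
  exact h2.symm

/-- No DFF tree of positive height is shattered by a class of teachers that all
share the same labeling function together with a history containing both labels. -/
lemma no_deep {X : Type} {Φ : Set (X → Bool)} :
    ∀ (e : ℕ) (𝒯 : Set (Teacher X Bool Φ)) (H : Set (X × Bool)) (a b : X),
    (a, false) ∈ H → (b, true) ∈ H →
    (∀ T ∈ 𝒯, ∀ T' ∈ 𝒯, T.label = T'.label) →
    ¬ ShatteredDFFT Φ 𝒯 H (e + 1) := by
  intro e
  induction e with
  | zero =>
    intro 𝒯 H a b ha hb hom hs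
    cases hs with
    | node _ _ _ x y φ hne hΦ h =>
      have hy1 : y (a, false) = true := by
        have h' := hne (a, false) ha
        revert h'; cases y (a, false) <;> simp
      have hy2 : y (b, true) = false := by
        have h' := hne (b, true) hb
        revert h'; cases y (b, true) <;> simp
      have h1 := h (a, false) ha
      have h2 := h (b, true) hb
      cases h1 with
      | leaf _ _ hex1 =>
        cases h2 with
        | leaf _ _ hex2 =>
          obtain ⟨T, hT, -⟩ := hex1
          obtain ⟨T', hT', -⟩ := hex2
          have e1 : T.label x = true := hy1 ▸ hT.2.1
          have e2 : T'.label x = false := hy2 ▸ hT'.2.1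
          rw [hom T hT.1 T' hT'.1] at e1
          rw [e1] at e2
          exact absurd e2 (by simp)
  | succ e ih =>
    intro 𝒯 H a b ha hb hom hs
    cases hs with
    | node _ _ _ x y φ hne hΦ h =>
      have h1 := h (a, false) ha
      exact ih _ _ a b (Set.mem_insert_of_mem _ ha) (Set.mem_insert_of_mem _ hb)
        (fun T hT T' hT' => hom T hT.1 T' hT'.1) h1

lemma sep_bound (d : ℕ) : ¬ ShatteredDFFT PhiNat sepClass sepHist (d + 2) := by
  intro hs
  cases hs with
  | node _ _ _ x y φ hne hΦ h =>
    have hmem : ((fun _ => false : ℕ → Bool), false) ∈ sepHist := Set.mem_insert _ _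
    have hs1 := h _ hmem
    refine no_deep d _ _ (fun _ => false : ℕ → Bool) (fun _ => true : ℕ → Bool)
      (Set.mem_insert_of_mem _ (by simp [sepHist]))
      (Set.mem_insert_of_mem _ (by simp [sepHist])) ?_ hs1
    rintro T ⟨⟨n, hl, hf⟩, hlx, hfb⟩ T' ⟨⟨k, hl', hf'⟩, hlx', hfb'⟩
    have hyv : y ((fun _ => false : ℕ → Bool), false) = true := by
      have h' := hne _ hmem
      revert h'; cases y ((fun _ => false : ℕ → Bool), false) <;> simp
    have hxn : x n = true := by rw [hl, hyv] at hlx; exact hlx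
    have hxk : x k = true := by rw [hl', hyv] at hlx'; exact hlx'
    rw [hf] at hfb
    rw [hf'] at hfb'
    unfold psiCoord at hfb hfb'
    rw [if_pos ⟨hxn, rfl⟩] at hfb
    rw [if_pos ⟨hxk, rfl⟩] at hfb'
    have hnk : n = k :=
      coordfun_inj ((Option.some.inj hfb).trans (Option.some.inj hfb').symm)
    rw [hl, hl', hnk]

lemma sep_shat1 : ShatteredDFFT PhiNat sepClass sepHist 1 := by
  refine ShatteredDFFT.node _ _ 0 (fun i => decide (i = 0)) (fun p => !p.2)
    (fun p => if p.2 then (fun z => !(z 1)) else (fun z => z 0)) ?_ ?_ ?_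
  · intro p _; simp
  · intro p _
    cases hp : p.2
    · simp only [hp, if_neg Bool.false_ne_true]
      exact Or.inl ⟨0, rfl⟩
    · simp only [hp, if_pos rfl]
      exact Or.inr ⟨1, rfl⟩
  · intro p hp
    simp only [sepHist, Set.mem_insert_iff, Set.mem_singleton_iff] at hp
    rcases hp with rfl | rfl
    · refine ShatteredDFFT.leaf _ _ ⟨Tcoord 0, ⟨⟨0, rfl, rfl⟩, ?_, ?_⟩, ?_⟩
      · rfl
      · rfl
      · intro q hq
        simp only [Set.mem_insert_iff, sepHist, Set.mem_singleton_iff] at hq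
        rcases hq with rfl | rfl | rfl <;> rfl
    · refine ShatteredDFFT.leaf _ _ ⟨Tcoord 1, ⟨⟨1, rfl, rfl⟩, ?_, ?_⟩, ?_⟩
      · rfl
      · rfl
      · intro q hq
        simp only [Set.mem_insert_iff, sepHist, Set.mem_singleton_iff] at hq
        rcases hq with rfl | rfl | rfl <;> rfl


/-! ### The online learning side -/

/-- The examples of the infinite Littlestone tree. -/
noncomputable def xseq (s : List Bool) : ℕ → Bool := fun m =>
  match (Encodable.decode m : Option (List Bool)) with
  | some t => if s <+: t then t.getD s.length false else false
  | none => false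

lemma xseq_encode (s t : List Bool) :
    xseq s (Encodable.encode t) = if s <+: t then t.getD s.length false else false := by
  simp [xseq, Encodable.encodek]

lemma getD_append (l r : List Bool) (c : Bool) :
    (l ++ [c] ++ r).getD l.length false = c := by
  simp [List.getD, List.append_assoc, List.getElem?_append_right,
    List.getElem_append_right]

lemma xseq_concat_prefix {s b : List Bool} {c : Bool} (h : s ++ [c] <+: b) :
    xseq s (Encodable.encode b) = c := by
  obtain ⟨r, hr⟩ := h
  subst hr
  rw [xseq_encode, if_pos, getD_append]
  exact ⟨[c] ++ r, (List.append_assoc _ _ _).symm⟩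

lemma xseq_mem (s : List Bool) : xseq s ∈ (HistX sepHist)ᶜ := by
  intro hx
  obtain ⟨y, hy⟩ := hx
  have h1 : xseq s (Encodable.encode (s ++ [true])) = true :=
    xseq_concat_prefix (List.prefix_refl _)
  have h0 : xseq s (Encodable.encode (s ++ [false])) = false :=
    xseq_concat_prefix (List.prefix_refl _)
  simp only [sepHist, Set.mem_insert_iff, Set.mem_singleton_iff, Prod.mk.injEq] at hy
  rcases hy with ⟨hf, -⟩ | ⟨hf, -⟩
  · rw [hf] at h1; exact absurd h1 (by simp)
  · rw [hf] at h0; exact absurd h0 (by simp)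

lemma coord_mem (n : ℕ) :
    (fun x : ((HistX sepHist)ᶜ : Set (ℕ → Bool)) => x.1 n) ∈ DtO sepClass sepHist :=
  ⟨Tcoord n, ⟨n, rfl, rfl⟩, rfl⟩

lemma sep_inftree : InfLTree (DtO sepClass sepHist) := by
  refine ⟨fun s => ⟨xseq s, xseq_mem s⟩, fun _ c => c, fun s => by simp, ?_⟩
  intro b
  exact ⟨fun x => x.1 (Encodable.encode b), coord_mem _,
    fun s c hsc => xseq_concat_prefix hsc⟩

lemma concat_pref (t s : List Bool) (c d : Bool) :
    t ++ [c] <+: s ++ [d] ↔ (t = s ∧ c = d) ∨ t ++ [c] <+: s := by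
  rw [List.prefix_concat_iff]
  constructor
  · rintro (h | h)
    · obtain ⟨h1, h2⟩ := List.append_inj' h rfl
      exact Or.inl ⟨h1, by simpa using h2⟩
    · exact Or.inr h
  · rintro (⟨rfl, rfl⟩ | h)
    · exact Or.inl rfl
    · exact Or.inr h

lemma sep_lshat_aux : ∀ (n : ℕ) (s : List Bool),
    LShat {f ∈ DtO sepClass sepHist |
      ∀ (t : List Bool) (c : Bool), t ++ [c] <+: s → f ⟨xseq t, xseq_mem t⟩ = c} n := by
  intro n
  induction n with
  | zero =>
    intro s
    exact LShat.leaf _ ⟨fun x => x.1 (Encodable.encode s), coord_mem _,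
      fun t c h => xseq_concat_prefix h⟩
  | succ n ih =>
    intro s
    have hset : ∀ d : Bool,
        {f ∈ {f ∈ DtO sepClass sepHist |
            ∀ (t : List Bool) (c : Bool), t ++ [c] <+: s → f ⟨xseq t, xseq_mem t⟩ = c} |
          f ⟨xseq s, xseq_mem s⟩ = d}
        = {f ∈ DtO sepClass sepHist |
            ∀ (t : List Bool) (c : Bool), t ++ [c] <+: s ++ [d] → f ⟨xseq t, xseq_mem t⟩ = c} := by
      intro d
      ext f
      simp only [Set.mem_setOf_eq]
      constructor
      · rintro ⟨⟨hF, hall⟩, hx⟩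
        refine ⟨hF, fun t c h => ?_⟩
        rcases (concat_pref t s c d).1 h with ⟨rfl, rfl⟩ | h
        · exact hx
        · exact hall t c h
      · rintro ⟨hF, hall⟩
        exact ⟨⟨hF, fun t c h => hall t c ((concat_pref t s c d).2 (Or.inr h))⟩,
          hall s d ((concat_pref s s d d).2 (Or.inl ⟨rfl, rfl⟩))⟩
    refine LShat.node _ n ⟨xseq s, xseq_mem s⟩ false true (by simp) ?_ ?_
    · rw [hset false]; exact ih (s ++ [false])
    · rw [hset true]; exact ih (s ++ [true])

lemma sep_lshat (n : ℕ) : LShat (DtO sepClass sepHist) n := by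
  have h := sep_lshat_aux n []
  have hset : {f ∈ DtO sepClass sepHist |
      ∀ (t : List Bool) (c : Bool), t ++ [c] <+: ([] : List Bool) →
        f ⟨xseq t, xseq_mem t⟩ = c} = DtO sepClass sepHist := by
    ext f
    simp only [Set.mem_setOf_eq, and_iff_left_iff_imp]
    intro _ t c hpre
    exact absurd hpre.length_le (by simp)
  rwa [hset] at h

/-- **Theorem (separation between DFF and Online Learning).** For the
natural feature construction with labels `{0,1}`, the teacher class
`𝒯 = {T_n : n ∈ ℕ}` and history `H = {(0̄,0), (1̄,1)}` satisfy
`DFFdim(𝒯, H) = 1` while `Ldim(DtO(𝒯, H)) = ∞`; moreover, there exists an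
infinite-depth Littlestone tree for `DtO(𝒯, H)`. -/
theorem dff_online_separation :
    DFFdim PhiNat sepClass sepHist = 1 ∧
    Ldim (DtO sepClass sepHist) = ⊤ ∧
    InfLTree (DtO sepClass sepHist) := by
  refine ⟨?_, ?_, sep_inftree⟩
  · rw [DFFdim]
    apply le_antisymm
    · refine sSup_le ?_
      rintro d ⟨n, rfl, hn⟩
      match n, hn with
      | 0, _ => exact_mod_cast Nat.zero_le 1
      | 1, _ => exact_mod_cast le_refl 1
      | (k + 2), hn => exact absurd hn (sep_bound k)
    · exact le_sSup ⟨1, by norm_num, sep_shat1⟩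
  · rw [Ldim, sSup_eq_top]
    intro b hb
    lift b to ℕ using hb.ne
    exact ⟨((b + 1 : ℕ) : ℕ∞), ⟨b + 1, rfl, sep_lshat (b + 1)⟩,
      by exact_mod_cast Nat.lt_succ_self b⟩
end
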